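/- arXiv:1510.05015 — 6 statements merged into one kernel-verified Lean document; each statement's English description precedes it below -/
import Mathlib

section
/- For every λ ∈ ℝ, the set F²_λ := {tr(y) : y : [a,b] → ℝ^{2n} is twice differentiable and -y''(x) + (V⊗I₂)(x)y(x) = λy(x) for all x ∈ [a,b]} is a Lagrangian subspace of (ℝ^{8n}, ω): it is a linear subspace with dim_ℝ F²_λ = 4n, and ω(Y₁,Y₂) = 0 for all Y₁, Y₂ ∈ F²_λ. -/
open Set Matrix

noncomputable section

/-- `ℝ^{2n}`, indexed by `Fin n × Fin 2`. -/
abbrev R2n (n : ℕ) := Fin n × Fin 2 → ℝ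

/-- `ℝ^{8n}`, written as a quadruple of vectors in `ℝ^{2n}`; the first two components
form the first `ℝ^{4n}`-half, the last two the second half. -/
abbrev R8n (n : ℕ) := R2n n × R2n n × R2n n × R2n n

/-- The symplectic form `ω((x₁,x₂),(y₁,y₂)) = ⟨x₁,y₂⟩ - ⟨x₂,y₁⟩` on `ℝ^{8n} = ℝ^{4n} × ℝ^{4n}`. -/
def omegaForm (n : ℕ) (X Y : R8n n) : ℝ :=
  (X.1 ⬝ᵥ Y.2.2.1 + X.2.1 ⬝ᵥ Y.2.2.2) - (X.2.2.1 ⬝ᵥ Y.1 + X.2.2.2 ⬝ᵥ Y.2.1)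

/-- The `2n × 2n` matrix `V(x) ⊗ I₂`. -/
def VI2 (n : ℕ) (V : ℝ → Matrix (Fin n) (Fin n) ℝ) (x : ℝ) :
    Matrix (Fin n × Fin 2) (Fin n × Fin 2) ℝ :=
  Matrix.kroneckerMap (· * ·) (V x) (1 : Matrix (Fin 2) (Fin 2) ℝ)

/-- `y` (with first and second derivatives `y'`, `y''` on `[a,b]`) is a twice differentiable
solution of `-y'' + (V⊗I₂)y = λ y` on `[a,b]`. -/
def IsSolR (n : ℕ) (a b : ℝ) (V : ℝ → Matrix (Fin n) (Fin n) ℝ) (lam : ℝ)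
    (y y' y'' : ℝ → R2n n) : Prop :=
  (∀ x ∈ Icc a b, HasDerivWithinAt y (y' x) (Icc a b) x) ∧
  (∀ x ∈ Icc a b, HasDerivWithinAt y' (y'' x) (Icc a b) x) ∧
  (∀ x ∈ Icc a b, -y'' x + (VI2 n V x).mulVec (y x) = lam • y x)

/-- The set `F²_λ` of traces `(y(a), y(b), -y'(a), y'(b))` of solutions of
`-y'' + (V⊗I₂)y = λ y` on `[a,b]`. -/
def F2 (n : ℕ) (a b : ℝ) (V : ℝ → Matrix (Fin n) (Fin n) ℝ) (lam : ℝ) : Set (R8n n) :=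
  {X | ∃ y y' y'' : ℝ → R2n n, IsSolR n a b V lam y y' y'' ∧
        X = (y a, y b, -(y' a), y' b)}

namespace F2Aux
open scoped NNReal

abbrev E (n : ℕ) := R2n n × R2n n

def clIcc (a b t : ℝ) : ℝ := max a (min t b)

lemma clIcc_mem {a b : ℝ} (hab : a ≤ b) (t : ℝ) : clIcc a b t ∈ Icc a b :=
  ⟨le_max_left _ _, max_le hab (min_le_right _ _)⟩

lemma clIcc_eq {a b t : ℝ} (ht : t ∈ Icc a b) : clIcc a b t = t := by
  unfold clIcc; rw [min_eq_left ht.2, max_eq_right ht.1]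

lemma continuous_clIcc (a b : ℝ) : Continuous (clIcc a b) :=
  continuous_const.max (continuous_id.min continuous_const)

variable {n : ℕ} {a b lam : ℝ} {V : ℝ → Matrix (Fin n) (Fin n) ℝ}

/-- The first-order vector field associated to `-y'' + (V⊗I₂)y = λ y`, with clamped time. -/
def vf (n : ℕ) (a b : ℝ) (V : ℝ → Matrix (Fin n) (Fin n) ℝ) (lam : ℝ) (t : ℝ) (z : E n) :
    E n :=
  (z.2, (VI2 n V (clIcc a b t)).mulVec z.1 - lam • z.1)

lemma vf_add (t : ℝ) (z w : E n) :
    vf n a b V lam t (z + w) = vf n a b V lam t z + vf n a b V lam t w := by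
  simp only [vf, Prod.fst_add, Prod.snd_add, Matrix.mulVec_add, smul_add, Prod.mk_add_mk,
    Prod.mk.injEq]
  exact ⟨trivial, by abel⟩

lemma vf_smul (t : ℝ) (c : ℝ) (z : E n) :
    vf n a b V lam t (c • z) = c • vf n a b V lam t z := by
  simp only [vf, Prod.smul_fst, Prod.smul_snd, Prod.smul_mk, Matrix.mulVec_smul, smul_sub,
    Prod.mk.injEq]
  exact ⟨trivial, by rw [smul_comm c lam]⟩

lemma vf_sub (t : ℝ) (z w : E n) :
    vf n a b V lam t z - vf n a b V lam t w = vf n a b V lam t (z - w) := by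
  have h := vf_add (n := n) (a := a) (b := b) (V := V) (lam := lam) t (z - w) w
  rw [sub_add_cancel] at h
  rw [h]; abel

lemma exists_entry_bound (hab : a ≤ b)
    (hVcont : ∀ i j, ContinuousOn (fun x => V x i j) (Icc a b)) :
    ∃ B : ℝ, 0 ≤ B ∧ ∀ t : ℝ, ∀ i j, |V (clIcc a b t) i j| ≤ B := by
  obtain ⟨C, hC⟩ := isCompact_Icc.exists_bound_of_continuousOn
    (f := fun x => fun p : Fin n × Fin n => V x p.1 p.2)
    (continuousOn_pi.2 fun p => hVcont p.1 p.2)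
  refine ⟨max C 0, le_max_right _ _, fun t i j => ?_⟩
  have h1 : ‖(fun p : Fin n × Fin n => V (clIcc a b t) p.1 p.2) (i, j)‖ ≤ C :=
    (norm_le_pi_norm _ (i, j)).trans (hC _ (clIcc_mem hab t))
  exact (le_max_left C 0).trans' h1

lemma mulVec_norm_le {M : Matrix (Fin n × Fin 2) (Fin n × Fin 2) ℝ} {B : ℝ}
    (hB : 0 ≤ B) (hM : ∀ p q, |M p q| ≤ B) (u : R2n n) :
    ‖M.mulVec u‖ ≤ (2 * n * B) * ‖u‖ := by
  rw [pi_norm_le_iff_of_nonneg (by positivity)]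
  intro p
  have h1 : |∑ q, M p q * u q| ≤ ∑ _q : Fin n × Fin 2, B * ‖u‖ := by
    refine (Finset.abs_sum_le_sum_abs _ _).trans (Finset.sum_le_sum fun q _ => ?_)
    rw [abs_mul]
    exact mul_le_mul (hM p q) (norm_le_pi_norm u q) (abs_nonneg _) hB
  have h2 : (∑ _q : Fin n × Fin 2, B * ‖u‖) = (2 * n * B) * ‖u‖ := by
    rw [Finset.sum_const, Finset.card_univ]
    simp [Fintype.card_prod]
    ring
  have h3 : ‖M.mulVec u p‖ = |∑ q, M p q * u q| := by
    simp [Matrix.mulVec, dotProduct, Real.norm_eq_abs]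
  rw [h3]; rw [h2] at h1; exact h1

lemma vf_norm_le {B : ℝ} (hB : 0 ≤ B) (hVB : ∀ t : ℝ, ∀ i j, |V (clIcc a b t) i j| ≤ B)
    (t : ℝ) (z : E n) :
    ‖vf n a b V lam t z‖ ≤ (2 * n * B + |lam| + 1) * ‖z‖ := by
  have hM : ∀ p q, |(VI2 n V (clIcc a b t)) p q| ≤ B := by
    rintro ⟨i, s⟩ ⟨j, u⟩
    simp only [VI2, Matrix.kroneckerMap_apply]
    rw [abs_mul]
    rcases eq_or_ne s u with h | h <;>
      simp [Matrix.one_apply, h] <;> [skip; exact hB] <;> exact hVB t i j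
  have hz1 : ‖z.1‖ ≤ ‖z‖ := norm_fst_le z
  have hz2 : ‖z.2‖ ≤ ‖z‖ := norm_snd_le z
  have hmv : ‖(VI2 n V (clIcc a b t)).mulVec z.1‖ ≤ (2 * n * B) * ‖z‖ :=
    (mulVec_norm_le hB hM z.1).trans (mul_le_mul_of_nonneg_left hz1 (by positivity))
  have h2 : ‖(VI2 n V (clIcc a b t)).mulVec z.1 - lam • z.1‖ ≤ (2 * n * B + |lam| + 1) * ‖z‖ := by
    have := norm_sub_le ((VI2 n V (clIcc a b t)).mulVec z.1) (lam • z.1)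
    rw [norm_smul, Real.norm_eq_abs] at this
    have h4 : |lam| * ‖z.1‖ ≤ |lam| * ‖z‖ := mul_le_mul_of_nonneg_left hz1 (abs_nonneg lam)
    linarith [norm_nonneg z]
  have h1 : ‖z.2‖ ≤ (2 * n * B + |lam| + 1) * ‖z‖ := by
    have h5 : 0 ≤ (2 * n * B + |lam|) * ‖z‖ :=
      mul_nonneg (by positivity) (norm_nonneg z)
    nlinarith
  calc ‖vf n a b V lam t z‖ = max ‖z.2‖ ‖(VI2 n V (clIcc a b t)).mulVec z.1 - lam • z.1‖ := by
        rw [vf, Prod.norm_def]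
    _ ≤ (2 * n * B + |lam| + 1) * ‖z‖ := max_le h1 h2

lemma vf_lipschitz {B : ℝ} (hB : 0 ≤ B) (hVB : ∀ t : ℝ, ∀ i j, |V (clIcc a b t) i j| ≤ B)
    (t : ℝ) : LipschitzWith (Real.toNNReal (2 * n * B + |lam| + 1)) (vf n a b V lam t) := by
  apply LipschitzWith.of_dist_le_mul
  intro z w
  rw [dist_eq_norm, dist_eq_norm, vf_sub,
    Real.coe_toNNReal _ (by positivity : (0:ℝ) ≤ 2 * n * B + |lam| + 1)]
  exact vf_norm_le hB hVB t (z - w)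

lemma vf_contT (hab : a ≤ b)
    (hVcont : ∀ i j, ContinuousOn (fun x => V x i j) (Icc a b)) (z : E n) :
    Continuous fun t => vf n a b V lam t z := by
  have hV : ∀ i j, Continuous fun t => V (clIcc a b t) i j := fun i j =>
    (hVcont i j).comp_continuous (continuous_clIcc a b) (clIcc_mem hab)
  refine Continuous.prodMk continuous_const (Continuous.sub ?_ continuous_const)
  refine continuous_pi fun p => ?_
  simp only [Matrix.mulVec, dotProduct, VI2, Matrix.kroneckerMap_apply]
  exact continuous_finset_sum _ fun q _ =>
    ((hV p.1 q.1).mul continuous_const).mul continuous_const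

lemma local_exists {K : ℝ} (hK : 1 ≤ K)
    (hKb : ∀ (t : ℝ) (z : E n), ‖vf n a b V lam t z‖ ≤ K * ‖z‖)
    (hlip : ∀ t : ℝ, LipschitzWith (Real.toNNReal K) (vf n a b V lam t))
    (hcont : ∀ z : E n, Continuous fun t => vf n a b V lam t z)
    {c d : ℝ} (hcd : c ≤ d) (hdc : d - c ≤ 1 / (2 * K)) (x₀ : E n) :
    ∃ w : ℝ → E n, w c = x₀ ∧
      ∀ t ∈ Icc c d, HasDerivWithinAt w (vf n a b V lam t (w t)) (Icc c d) t := by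
  have hKpos : (0:ℝ) < K := lt_of_lt_of_le one_pos hK
  have hc : c ∈ Icc c d := ⟨le_refl c, hcd⟩
  have hR : (0:ℝ) ≤ ‖x₀‖ + 1 := by positivity
  have hC : (0:ℝ) ≤ K * (2 * ‖x₀‖ + 1) := by positivity
  have hPL : IsPicardLindelof (vf n a b V lam) (tmin := c) (tmax := d) ⟨c, hc⟩ x₀
      (Real.toNNReal (‖x₀‖ + 1)) 0 (Real.toNNReal (K * (2 * ‖x₀‖ + 1))) (Real.toNNReal K) := by
    constructor
    · exact fun t _ => (hlip t).lipschitzOnWith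
    · exact fun x _ => (hcont x).continuousOn
    · intro t _ x hx
      rw [Real.coe_toNNReal _ hR] at hx
      rw [Real.coe_toNNReal _ hC]
      have hxn : ‖x‖ ≤ 2 * ‖x₀‖ + 1 := by
        have h1 : ‖x - x₀‖ ≤ ‖x₀‖ + 1 := mem_closedBall_iff_norm.mp hx
        have h2 : ‖x‖ ≤ ‖x - x₀‖ + ‖x₀‖ := by
          calc ‖x‖ = ‖x - x₀ + x₀‖ := by rw [sub_add_cancel]
            _ ≤ ‖x - x₀‖ + ‖x₀‖ := norm_add_le _ _
        linarith
      exact (hKb t x).trans (by nlinarith [norm_nonneg x, norm_nonneg x₀])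
    · rw [Real.coe_toNNReal _ hR, Real.coe_toNNReal _ hC, NNReal.coe_zero, sub_zero]
      show K * (2 * ‖x₀‖ + 1) * max (d - c) (c - c) ≤ ‖x₀‖ + 1
      have hmax : max (d - c) (c - c) = d - c := by
        rw [sub_self]; exact max_eq_left (by linarith)
      rw [hmax]
      have h2 : K * (d - c) ≤ 1 / 2 := by
        calc K * (d - c) ≤ K * (1 / (2 * K)) := mul_le_mul_of_nonneg_left hdc hKpos.le
          _ = 1 / 2 := by field_simp
      nlinarith [norm_nonneg x₀]
  obtain ⟨w, hw0, hw⟩ := hPL.exists_eq_forall_mem_Icc_hasDerivWithinAt₀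
  exact ⟨w, hw0, hw⟩

lemma glue {f : ℝ → E n → E n} {a c d : ℝ} (hac : a ≤ c) (hcd : c ≤ d)
    {z₁ z₂ : ℝ → E n}
    (h₁ : ∀ t ∈ Icc a c, HasDerivWithinAt z₁ (f t (z₁ t)) (Icc a c) t)
    (h₂ : ∀ t ∈ Icc c d, HasDerivWithinAt z₂ (f t (z₂ t)) (Icc c d) t)
    (hmatch : z₂ c = z₁ c) :
    ∃ z : ℝ → E n, (∀ t ∈ Icc a c, z t = z₁ t) ∧
      ∀ t ∈ Icc a d, HasDerivWithinAt z (f t (z t)) (Icc a d) t := by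
  classical
  set z : ℝ → E n := fun t => if t ≤ c then z₁ t else z₂ t with hzdef
  have e₁ : ∀ t ∈ Icc a c, z t = z₁ t := fun t ht => if_pos ht.2
  have e₂ : ∀ t ∈ Icc c d, z t = z₂ t := by
    intro t ht
    by_cases h : t ≤ c
    · have htc : t = c := le_antisymm h ht.1
      simp only [hzdef, htc, if_pos (le_refl c), hmatch]
    · exact if_neg h
  refine ⟨z, e₁, ?_⟩
  intro t ht
  rw [← Icc_union_Icc_eq_Icc hac hcd]
  refine HasDerivWithinAt.union ?_ ?_
  · by_cases h : t ∈ Icc a c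
    · rw [show z t = z₁ t from e₁ t h]
      exact (h₁ t h).congr e₁ (e₁ t h)
    · have hcl : t ∉ closure (Icc a c) := by rwa [isClosed_Icc.closure_eq]
      exact hasDerivWithinAt_iff_hasFDerivWithinAt.mpr
        (HasFDerivWithinAt.of_notMem_closure hcl)
  · by_cases h : t ∈ Icc c d
    · rw [show z t = z₂ t from e₂ t h]
      exact (h₂ t h).congr e₂ (e₂ t h)
    · have hcl : t ∉ closure (Icc c d) := by rwa [isClosed_Icc.closure_eq]
      exact hasDerivWithinAt_iff_hasFDerivWithinAt.mpr
        (HasFDerivWithinAt.of_notMem_closure hcl)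

lemma exists_sol (hab : a ≤ b) {K : ℝ} (hK : 1 ≤ K)
    (hKb : ∀ (t : ℝ) (z : E n), ‖vf n a b V lam t z‖ ≤ K * ‖z‖)
    (hlip : ∀ t : ℝ, LipschitzWith (Real.toNNReal K) (vf n a b V lam t))
    (hcont : ∀ z : E n, Continuous fun t => vf n a b V lam t z) (z₀ : E n) :
    ∃ z : ℝ → E n, z a = z₀ ∧
      ∀ t ∈ Icc a b, HasDerivWithinAt z (vf n a b V lam t (z t)) (Icc a b) t := by
  have hKpos : (0:ℝ) < K := lt_of_lt_of_le one_pos hK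
  set h : ℝ := 1 / (2 * K) with hh
  have hhpos : 0 < h := by positivity
  have main : ∀ k : ℕ, ∀ z₀ : E n, ∃ z : ℝ → E n, z a = z₀ ∧
      ∀ t ∈ Icc a (min b (a + k * h)),
        HasDerivWithinAt z (vf n a b V lam t (z t)) (Icc a (min b (a + k * h))) t := by
    intro k
    induction k with
    | zero =>
      intro z₀
      refine ⟨fun _ => z₀, rfl, ?_⟩
      intro t ht
      have hmin : min b (a + (0:ℕ) * h) = a := by
        simp only [Nat.cast_zero, zero_mul, add_zero]
        exact min_eq_right hab
      rw [hmin] at ht ⊢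
      rw [Icc_self] at ht ⊢
      rw [mem_singleton_iff] at ht
      subst ht
      rw [hasDerivWithinAt_iff_isLittleO, nhdsWithin_singleton]
      simp [Asymptotics.isLittleO_pure]
    | succ k ih =>
      intro z₀
      obtain ⟨z₁, hz₁a, hz₁⟩ := ih z₀
      set c : ℝ := min b (a + k * h) with hc
      set d : ℝ := min b (a + (k + 1 : ℕ) * h) with hd
      have hac : a ≤ c := le_min hab (le_add_of_nonneg_right (by positivity))
      have hcd : c ≤ d := by
        apply min_le_min (le_refl b)
        have : (k:ℝ) ≤ ((k+1:ℕ):ℝ) := by push_cast; linarith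
        nlinarith
      have hdc : d - c ≤ h := by
        rcases le_or_gt b (a + k * h) with hb' | hb'
        · have hc' : c = b := min_eq_left hb'
          have hd' : d = b := min_eq_left (by push_cast; nlinarith)
          rw [hc', hd', sub_self]; exact hhpos.le
        · have hc' : c = a + k * h := min_eq_right hb'.le
          have hd' : d ≤ a + (k + 1 : ℕ) * h := min_le_right _ _
          push_cast at hd' ⊢
          rw [hc']
          push_cast
          linarith
      obtain ⟨z₂, hz₂c, hz₂⟩ := local_exists hK hKb hlip hcont hcd (by rw [← hh]; exact hdc) (z₁ c)
      have hz₁' : ∀ t ∈ Icc a c, HasDerivWithinAt z₁ (vf n a b V lam t (z₁ t)) (Icc a c) t :=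
        hz₁
      obtain ⟨z, hze, hzd⟩ := glue hac hcd hz₁' hz₂ hz₂c
      exact ⟨z, by rw [hze a ⟨le_refl a, hac⟩, hz₁a], hzd⟩
  set N : ℕ := ⌈(b - a) / h⌉₊ with hN
  obtain ⟨z, hza, hz⟩ := main N z₀
  have hbN : b ≤ a + N * h := by
    have h1 : (b - a) / h ≤ (N : ℝ) := Nat.le_ceil _
    have h2 : b - a ≤ N * h := by
      rw [div_le_iff₀ hhpos] at h1; linarith
    linarith
  have hmin : min b (a + N * h) = b := min_eq_left hbN
  rw [hmin] at hz
  exact ⟨z, hza, hz⟩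

lemma sol_unique {K : ℝ≥0} (hlip : ∀ t : ℝ, LipschitzWith K (vf n a b V lam t))
    {z w : ℝ → E n}
    (hz : ∀ t ∈ Icc a b, HasDerivWithinAt z (vf n a b V lam t (z t)) (Icc a b) t)
    (hw : ∀ t ∈ Icc a b, HasDerivWithinAt w (vf n a b V lam t (w t)) (Icc a b) t)
    (hzw : z a = w a) : EqOn z w (Icc a b) := by
  refine ODE_solution_unique_of_mem_Icc_right
    (v := vf n a b V lam) (s := fun _ => (univ : Set (E n)))
    (fun t _ => (hlip t).lipschitzOnWith)
    (fun t ht => (hz t ht).continuousWithinAt)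
    (fun t ht => (hz t (mem_Icc_of_Ico ht)).mono_of_mem_nhdsWithin
      (Icc_mem_nhdsGE_of_mem ht))
    (fun _ _ => trivial)
    (fun t ht => (hw t ht).continuousWithinAt)
    (fun t ht => (hw t (mem_Icc_of_Ico ht)).mono_of_mem_nhdsWithin
      (Icc_mem_nhdsGE_of_mem ht))
    (fun _ _ => trivial) hzw


lemma VI2_symm {x : ℝ} (h : (V x)ᵀ = V x) : (VI2 n V x)ᵀ = VI2 n V x := by
  ext p q
  simp only [VI2, Matrix.transpose_apply, Matrix.kroneckerMap_apply]
  have h1 : V x q.1 p.1 = V x p.1 q.1 := by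
    conv_lhs => rw [← h]
    rw [Matrix.transpose_apply]
  rw [h1]
  congr 1
  by_cases hpq : p.2 = q.2
  · rw [hpq]
  · rw [Matrix.one_apply_ne (Ne.symm hpq), Matrix.one_apply_ne hpq]

lemma hasDeriv_dot {s : Set ℝ} {x : ℝ} {u v : ℝ → R2n n} {u' v' : R2n n}
    (hu : HasDerivWithinAt u u' s x) (hv : HasDerivWithinAt v v' s x) :
    HasDerivWithinAt (fun t => u t ⬝ᵥ v t) (u' ⬝ᵥ v x + u x ⬝ᵥ v') s x := by
  have hp : ∀ p : Fin n × Fin 2, HasDerivWithinAt (fun t => u t p * v t p)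
      (u' p * v x p + u x p * v' p) s x := fun p =>
    (hasDerivWithinAt_pi.mp hu p).mul (hasDerivWithinAt_pi.mp hv p)
  have hsum := HasDerivWithinAt.sum (u := Finset.univ)
    (A := fun p t => u t p * v t p) (A' := fun p => u' p * v x p + u x p * v' p)
    (fun p _ => hp p)
  simpa [dotProduct, Finset.sum_add_distrib, Finset.sum_fn] using hsum

end F2Aux

/-- for every `λ ∈ ℝ`, `F²_λ` is a Lagrangian subspace of `(ℝ^{8n}, ω)`:
it is a linear subspace of real dimension `4n` on which `ω` vanishes identically. -/
theorem F2_lagrangian (n : ℕ) (hn : 1 ≤ n) (a b : ℝ) (hab : a < b)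
    (V : ℝ → Matrix (Fin n) (Fin n) ℝ)
    (hVcont : ∀ i j, ContinuousOn (fun x => V x i j) (Icc a b))
    (hVsymm : ∀ x ∈ Icc a b, (V x)ᵀ = V x)
    (lam : ℝ) :
    ∃ S : Submodule ℝ (R8n n),
      (S : Set (R8n n)) = F2 n a b V lam ∧
      Module.finrank ℝ S = 4 * n ∧
      ∀ Y₁ ∈ F2 n a b V lam, ∀ Y₂ ∈ F2 n a b V lam, omegaForm n Y₁ Y₂ = 0 := by
  classical
  -- ω vanishes on F2 (Wronskian argument)
  have homega : ∀ Y₁ ∈ F2 n a b V lam, ∀ Y₂ ∈ F2 n a b V lam, omegaForm n Y₁ Y₂ = 0 := by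
    rintro Y₁ ⟨y₁, y₁', y₁'', ⟨hy₁, hy₁', he₁⟩, rfl⟩ Y₂ ⟨y₂, y₂', y₂'', ⟨hy₂, hy₂', he₂⟩, rfl⟩
    have hW : ∀ x ∈ Icc a b,
        HasDerivWithinAt (fun t => y₁ t ⬝ᵥ y₂' t - y₁' t ⬝ᵥ y₂ t) 0 (Icc a b) x := by
      intro x hx
      have h1 := F2Aux.hasDeriv_dot (hy₁ x hx) (hy₂' x hx)
      have h2 := F2Aux.hasDeriv_dot (hy₁' x hx) (hy₂ x hx)
      have e₁' : y₁'' x = (VI2 n V x).mulVec (y₁ x) - lam • y₁ x := by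
        rw [← he₁ x hx]; abel
      have e₂' : y₂'' x = (VI2 n V x).mulVec (y₂ x) - lam • y₂ x := by
        rw [← he₂ x hx]; abel
      have hsym := F2Aux.VI2_symm (n := n) (V := V) (hVsymm x hx)
      have key : y₁ x ⬝ᵥ (VI2 n V x).mulVec (y₂ x) = (VI2 n V x).mulVec (y₁ x) ⬝ᵥ y₂ x := by
        rw [Matrix.dotProduct_mulVec, ← hsym, Matrix.vecMul_transpose, hsym]
      have hval0 : (y₁' x ⬝ᵥ y₂' x + y₁ x ⬝ᵥ y₂'' x) -
          (y₁'' x ⬝ᵥ y₂ x + y₁' x ⬝ᵥ y₂' x) = 0 := by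
        rw [e₁', e₂', dotProduct_sub, sub_dotProduct, dotProduct_smul,
          smul_dotProduct, key]
        simp only [smul_eq_mul]
        ring
      have h3 := h1.sub h2
      rw [hval0] at h3
      exact h3
    have hWconst := constant_of_has_deriv_right_zero
      (f := fun t => y₁ t ⬝ᵥ y₂' t - y₁' t ⬝ᵥ y₂ t)
      (fun x hx => (hW x hx).continuousWithinAt)
      (fun x hx => (hW x (mem_Icc_of_Ico hx)).mono_of_mem_nhdsWithin
        (Icc_mem_nhdsGE_of_mem hx))
    have hWb : y₁ b ⬝ᵥ y₂' b - y₁' b ⬝ᵥ y₂ b = y₁ a ⬝ᵥ y₂' a - y₁' a ⬝ᵥ y₂ a :=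
      hWconst b (right_mem_Icc.mpr hab.le)
    simp only [omegaForm, dotProduct_neg, neg_dotProduct]
    linarith
  -- existence and uniqueness machinery
  obtain ⟨B, hB, hVB⟩ := F2Aux.exists_entry_bound (V := V) hab.le hVcont
  set K : ℝ := 2 * n * B + |lam| + 1 with hKdef
  have h2nB : (0:ℝ) ≤ 2 * n * B := by positivity
  have hK : 1 ≤ K := by
    have := abs_nonneg lam; rw [hKdef]; linarith
  have hKb : ∀ (t : ℝ) (z : F2Aux.E n), ‖F2Aux.vf n a b V lam t z‖ ≤ K * ‖z‖ :=
    fun t z => F2Aux.vf_norm_le hB hVB t z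
  have hlip : ∀ t : ℝ, LipschitzWith (Real.toNNReal K) (F2Aux.vf n a b V lam t) :=
    fun t => F2Aux.vf_lipschitz hB hVB t
  have hcont : ∀ z : F2Aux.E n, Continuous fun t => F2Aux.vf n a b V lam t z :=
    fun z => F2Aux.vf_contT hab.le hVcont z
  have hex : ∀ z₀ : F2Aux.E n, ∃ z : ℝ → F2Aux.E n, z a = z₀ ∧
      ∀ t ∈ Icc a b, HasDerivWithinAt z (F2Aux.vf n a b V lam t (z t)) (Icc a b) t :=
    fun z₀ => F2Aux.exists_sol hab.le hK hKb hlip hcont z₀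
  set sol : F2Aux.E n → ℝ → F2Aux.E n := fun z₀ => (hex z₀).choose with hsoldef
  have sola : ∀ z₀, sol z₀ a = z₀ := fun z₀ => (hex z₀).choose_spec.1
  have sold : ∀ z₀, ∀ t ∈ Icc a b,
      HasDerivWithinAt (sol z₀) (F2Aux.vf n a b V lam t (sol z₀ t)) (Icc a b) t :=
    fun z₀ => (hex z₀).choose_spec.2
  have uniq : ∀ z w : ℝ → F2Aux.E n,
      (∀ t ∈ Icc a b, HasDerivWithinAt z (F2Aux.vf n a b V lam t (z t)) (Icc a b) t) →
      (∀ t ∈ Icc a b, HasDerivWithinAt w (F2Aux.vf n a b V lam t (w t)) (Icc a b) t) →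
      z a = w a → EqOn z w (Icc a b) :=
    fun z w hz hw h0 => F2Aux.sol_unique hlip hz hw h0
  -- the trace map
  set φ : F2Aux.E n → R8n n :=
    fun z₀ => (z₀.1, (sol z₀ b).1, -z₀.2, (sol z₀ b).2) with hφdef
  have hmem : ∀ z₀, φ z₀ ∈ F2 n a b V lam := by
    intro z₀
    refine ⟨fun t => (sol z₀ t).1, fun t => (sol z₀ t).2,
      fun t => (F2Aux.vf n a b V lam t (sol z₀ t)).2, ⟨?_, ?_, ?_⟩, ?_⟩
    · intro x hx
      exact (ContinuousLinearMap.fst ℝ (R2n n) (R2n n)).hasFDerivAt.comp_hasDerivWithinAt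
        x (sold z₀ x hx)
    · intro x hx
      exact (ContinuousLinearMap.snd ℝ (R2n n) (R2n n)).hasFDerivAt.comp_hasDerivWithinAt
        x (sold z₀ x hx)
    · intro x hx
      show -(F2Aux.vf n a b V lam x (sol z₀ x)).2 + (VI2 n V x).mulVec ((sol z₀ x).1)
        = lam • (sol z₀ x).1
      simp only [F2Aux.vf, F2Aux.clIcc_eq hx]
      abel
    · simp only [hφdef, sola z₀]
  have hsurj : ∀ X ∈ F2 n a b V lam, ∃ z₀, φ z₀ = X := by
    rintro X ⟨y, y', y'', ⟨hy, hy', he⟩, rfl⟩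
    set z : ℝ → F2Aux.E n := fun t => (y t, y' t) with hzdef
    have hz : ∀ t ∈ Icc a b, HasDerivWithinAt z (F2Aux.vf n a b V lam t (z t)) (Icc a b) t := by
      intro t ht
      have h1 := (hy t ht).prodMk (hy' t ht)
      have h2 : F2Aux.vf n a b V lam t (z t) = (y' t, y'' t) := by
        simp only [F2Aux.vf, F2Aux.clIcc_eq ht, hzdef]
        refine Prod.ext rfl ?_
        rw [← he t ht]; module
      rw [h2]; exact h1
    refine ⟨z a, ?_⟩
    have hzb : z b = sol (z a) b :=
      uniq z (sol (z a)) hz (sold (z a)) (by rw [sola]) (right_mem_Icc.mpr hab.le)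
    simp only [hφdef]
    rw [← hzb]
  have hadd : ∀ z₀ w₀, φ (z₀ + w₀) = φ z₀ + φ w₀ := by
    intro z₀ w₀
    have hsum : ∀ t ∈ Icc a b, HasDerivWithinAt (fun t => sol z₀ t + sol w₀ t)
        (F2Aux.vf n a b V lam t (sol z₀ t + sol w₀ t)) (Icc a b) t := by
      intro t ht
      have h := (sold z₀ t ht).add (sold w₀ t ht)
      rwa [← F2Aux.vf_add] at h
    have hb' : sol z₀ b + sol w₀ b = sol (z₀ + w₀) b :=
      uniq _ (sol (z₀ + w₀)) hsum (sold (z₀ + w₀))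
        (by simp only [sola]) (right_mem_Icc.mpr hab.le)
    simp only [hφdef]
    rw [← hb']
    simp [Prod.ext_iff, neg_add, add_comm]
  have hsmul : ∀ (c : ℝ) z₀, φ (c • z₀) = c • φ z₀ := by
    intro c z₀
    have hsc : ∀ t ∈ Icc a b, HasDerivWithinAt (fun t => c • sol z₀ t)
        (F2Aux.vf n a b V lam t (c • sol z₀ t)) (Icc a b) t := by
      intro t ht
      have h := (sold z₀ t ht).const_smul c
      rwa [← F2Aux.vf_smul] at h
    have hb' : c • sol z₀ b = sol (c • z₀) b :=
      uniq _ (sol (c • z₀)) hsc (sold (c • z₀))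
        (by simp only [sola]) (right_mem_Icc.mpr hab.le)
    simp only [hφdef]
    rw [← hb']
    simp [Prod.ext_iff]
  set Φ : F2Aux.E n →ₗ[ℝ] R8n n :=
    ⟨⟨φ, fun z₀ w₀ => hadd z₀ w₀⟩, fun c z₀ => hsmul c z₀⟩ with hΦdef
  have hΦapp : ∀ z₀, Φ z₀ = φ z₀ := fun _ => rfl
  have hinj : Function.Injective Φ := by
    intro z₀ w₀ hzw
    have h1 : z₀.1 = w₀.1 := congrArg (fun X : R8n n => X.1) hzw
    have h2 : -z₀.2 = -w₀.2 := congrArg (fun X : R8n n => X.2.2.1) hzw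
    exact Prod.ext h1 (neg_injective h2)
  refine ⟨LinearMap.range Φ, ?_, ?_, homega⟩
  · ext X
    simp only [SetLike.mem_coe, LinearMap.mem_range]
    constructor
    · rintro ⟨z₀, rfl⟩
      rw [hΦapp]
      exact hmem z₀
    · intro hX
      obtain ⟨z₀, hz₀⟩ := hsurj X hX
      exact ⟨z₀, by rw [hΦapp, hz₀]⟩
  · rw [LinearMap.finrank_range_of_inj hinj]
    have h1 : Module.finrank ℝ (F2Aux.E n) = 4 * n := by
      rw [Module.finrank_prod]
      have h2 : Module.finrank ℝ (R2n n) = n * 2 := by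
        rw [Module.finrank_pi]
        simp [Fintype.card_prod]
      rw [h2]; ring
    exact h1
end
end

section
/- Fix r ∈ ℝ. For any finite collection of pairwise distinct θ₁, …, θ_m ∈ (0,π), one has Σ_{j=1}^m dim_ℂ E(r,θ_j) ≤ n. The same bound holds for pairwise distinct θ₁, …, θ_m ∈ (π,2π). -/
open Set Matrix

noncomputable section


/-- `u` (with derivatives `u'`, `u''` on `[a,b]`) is a `(λ,θ)`-eigenfunction:
`-u'' + Vu = λu` on `[a,b]` with `θ`-periodic boundary conditions. -/
def IsEig (n : ℕ) (a b : ℝ) (V : ℝ → Matrix (Fin n) (Fin n) ℝ) (lam θ : ℝ)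
    (u u' u'' : ℝ → Fin n → ℂ) : Prop :=
  (∀ x ∈ Icc a b, HasDerivWithinAt u (u' x) (Icc a b) x) ∧
  (∀ x ∈ Icc a b, HasDerivWithinAt u' (u'' x) (Icc a b) x) ∧
  (∀ x ∈ Icc a b, -u'' x + ((V x).map Complex.ofReal).mulVec (u x) = (lam : ℂ) • u x) ∧
  u b = Complex.exp (θ * Complex.I) • u a ∧
  u' b = Complex.exp (θ * Complex.I) • u' a

/-- The eigenspace `E(λ,θ)`, realized as the set of restrictions to `[a,b]` of
`(λ,θ)`-eigenfunctions. -/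
def Eset (n : ℕ) (a b : ℝ) (V : ℝ → Matrix (Fin n) (Fin n) ℝ) (lam θ : ℝ) :
    Set (Icc a b → Fin n → ℂ) :=
  {f | ∃ u u' u'', IsEig n a b V lam θ u u' u'' ∧ ∀ x : Icc a b, f x = u x}

namespace EigAux

variable {n : ℕ} {a b : ℝ} {V : ℝ → Matrix (Fin n) (Fin n) ℝ} {r : ℝ}

/-- The ODE part (no boundary conditions). -/
def IsSol (n : ℕ) (a b : ℝ) (V : ℝ → Matrix (Fin n) (Fin n) ℝ) (r : ℝ)
    (u u' u'' : ℝ → Fin n → ℂ) : Prop :=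
  (∀ x ∈ Icc a b, HasDerivWithinAt u (u' x) (Icc a b) x) ∧
  (∀ x ∈ Icc a b, HasDerivWithinAt u' (u'' x) (Icc a b) x) ∧
  (∀ x ∈ Icc a b, -u'' x + ((V x).map Complex.ofReal).mulVec (u x) = (r : ℂ) • u x)

theorem sol_unique (hab : a < b) {C : ℝ} (hC0 : 0 ≤ C)
    (hC : ∀ x ∈ Icc a b, ∀ i j, |V x i j| ≤ C)
    {u u' u'' : ℝ → Fin n → ℂ} (h : IsSol n a b V r u u' u'')
    (ha1 : u a = 0) (ha2 : u' a = 0) :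
    ∀ x ∈ Icc a b, u x = 0 ∧ u' x = 0 := by
  obtain ⟨h1, h2, h3⟩ := h
  set A : ℝ → Matrix (Fin n) (Fin n) ℂ :=
    fun t => (V (projIcc a b hab.le t)).map Complex.ofReal with hA
  set v : ℝ → ((Fin n → ℂ) × (Fin n → ℂ)) → ((Fin n → ℂ) × (Fin n → ℂ)) :=
    fun t z => (z.2, (A t).mulVec z.1 - (r : ℂ) • z.1) with hv
  have hKnn : (0:ℝ) ≤ max 1 (n * C + |r|) := le_trans zero_le_one (le_max_left _ _)
  set Knn : NNReal := ⟨max 1 (n * C + |r|), hKnn⟩ with hK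
  have hAbound : ∀ t i j, ‖A t i j‖ ≤ C := by
    intro t i j
    have hmem := (projIcc a b hab.le t).2
    simpa [hA, Matrix.map_apply] using hC _ hmem i j
  have hlin : ∀ t (z z' : (Fin n → ℂ) × (Fin n → ℂ)), v t z - v t z' = v t (z - z') := by
    intro t z z'
    simp only [hv]
    refine Prod.ext rfl ?_
    simp only [Prod.fst_sub, Prod.snd_sub, Matrix.mulVec_sub, smul_sub]
    abel
  have hnorm : ∀ t (w : (Fin n → ℂ) × (Fin n → ℂ)), ‖v t w‖ ≤ Knn * ‖w‖ := by
    intro t w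
    have hw1 : ‖w.1‖ ≤ ‖w‖ := le_max_left _ _
    have hw2 : ‖w.2‖ ≤ ‖w‖ := le_max_right _ _
    have hwnn : (0:ℝ) ≤ ‖w‖ := norm_nonneg _
    have hKge : (Knn : ℝ) = max 1 (n * C + |r|) := rfl
    rw [Prod.norm_def]
    apply max_le
    · calc ‖w.2‖ ≤ 1 * ‖w‖ := by linarith
        _ ≤ Knn * ‖w‖ := by
          apply mul_le_mul_of_nonneg_right _ hwnn
          rw [hKge]; exact le_max_left _ _
    · have key : ∀ i, ‖((A t).mulVec w.1 - (r:ℂ) • w.1) i‖ ≤ (n * C + |r|) * ‖w‖ := by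
        intro i
        have : ((A t).mulVec w.1 - (r:ℂ) • w.1) i
            = (∑ j, A t i j * w.1 j) - (r:ℂ) * w.1 i := by
          simp [Matrix.mulVec, dotProduct]
        rw [this]
        have h1' : ‖∑ j, A t i j * w.1 j‖ ≤ n * (C * ‖w‖) := by
          calc ‖∑ j, A t i j * w.1 j‖ ≤ ∑ j, ‖A t i j * w.1 j‖ := norm_sum_le _ _
            _ ≤ ∑ _j : Fin n, C * ‖w‖ := by
                apply Finset.sum_le_sum
                intro j _
                rw [norm_mul]
                have := hAbound t i j
                have h2' : ‖w.1 j‖ ≤ ‖w‖ := le_trans (norm_le_pi_norm w.1 j) hw1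
                exact mul_le_mul this h2' (norm_nonneg _) hC0
            _ = n * (C * ‖w‖) := by simp [Finset.sum_const, mul_assoc]
        have h2' : ‖(r:ℂ) * w.1 i‖ ≤ |r| * ‖w‖ := by
          rw [norm_mul, Complex.norm_real, Real.norm_eq_abs]
          exact mul_le_mul_of_nonneg_left (le_trans (norm_le_pi_norm w.1 i) hw1) (abs_nonneg r)
        calc ‖(∑ j, A t i j * w.1 j) - (r:ℂ) * w.1 i‖
            ≤ ‖∑ j, A t i j * w.1 j‖ + ‖(r:ℂ) * w.1 i‖ := norm_sub_le _ _
          _ ≤ n * (C * ‖w‖) + |r| * ‖w‖ := add_le_add h1' h2'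
          _ = (n * C + |r|) * ‖w‖ := by ring
      have := pi_norm_le_iff_of_nonneg (by positivity :
          (0:ℝ) ≤ (n * C + |r|) * ‖w‖) |>.2 key
      calc ‖((A t).mulVec w.1 - (r:ℂ) • w.1)‖ ≤ (n * C + |r|) * ‖w‖ := this
        _ ≤ Knn * ‖w‖ := by
          apply mul_le_mul_of_nonneg_right _ hwnn
          rw [hKge]; exact le_max_right _ _
  have hlip : ∀ t, LipschitzWith Knn (v t) := by
    intro t
    apply LipschitzWith.of_dist_le_mul
    intro z z'
    rw [dist_eq_norm, dist_eq_norm, hlin]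
    exact hnorm t (z - z')
  set f : ℝ → (Fin n → ℂ) × (Fin n → ℂ) := fun t => (u t, u' t) with hf
  have hsol : EqOn f (fun _ => 0) (Icc a b) := by
    apply ODE_solution_unique (v := v) hlip
    · intro t ht
      exact ((h1 t ht).continuousWithinAt).prodMk ((h2 t ht).continuousWithinAt)
    · intro t ht
      have hmem : t ∈ Icc a b := Ico_subset_Icc_self ht
      have e1 : HasDerivWithinAt u (u' t) (Ici t) t := by
        have := (h1 t hmem).mono (Icc_subset_Icc ht.1 le_rfl)
        rw [← Ici_inter_Iic] at this
        exact (hasDerivWithinAt_inter (Iic_mem_nhds ht.2)).mp this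
      have e2 : HasDerivWithinAt u' (u'' t) (Ici t) t := by
        have := (h2 t hmem).mono (Icc_subset_Icc ht.1 le_rfl)
        rw [← Ici_inter_Iic] at this
        exact (hasDerivWithinAt_inter (Iic_mem_nhds ht.2)).mp this
      have hval : v t (f t) = (u' t, u'' t) := by
        refine Prod.ext rfl ?_
        have hproj : projIcc a b hab.le t = ⟨t, hmem⟩ := projIcc_of_mem hab.le hmem
        have h3' := h3 t hmem
        simp only [hv, hA, hproj]
        rw [← h3']
        abel
      rw [hval]
      exact e1.prodMk e2
    · exact continuousOn_const
    · intro t ht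
      have : v t 0 = 0 := by
        simp [hv, Matrix.mulVec_zero]
      rw [this]
      exact (hasDerivWithinAt_const _ _ _)
    · simp [hf, ha1, ha2, Prod.ext_iff]
  intro x hx
  have := hsol hx
  simp only [hf, Prod.ext_iff] at this
  exact ⟨this.1, this.2⟩

theorem deriv_zero_of_zero (hab : a < b) {u w : ℝ → Fin n → ℂ}
    (hd : ∀ x ∈ Icc a b, HasDerivWithinAt u (w x) (Icc a b) x)
    (h0 : ∀ x ∈ Icc a b, u x = 0) : ∀ x ∈ Icc a b, w x = 0 := by
  intro x hx
  have hz : HasDerivWithinAt u (0 : Fin n → ℂ) (Icc a b) x :=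
    (hasDerivWithinAt_const x _ (0 : Fin n → ℂ)).congr (fun y hy => h0 y hy) (h0 x hx)
  exact (UniqueDiffWithinAt.eq_deriv _ (uniqueDiffOn_Icc hab x hx) (hd x hx) hz)

theorem isSol_sum {M : ℕ} (c : Fin M → ℂ) (U U' U'' : Fin M → ℝ → Fin n → ℂ)
    (h : ∀ j, IsSol n a b V r (U j) (U' j) (U'' j)) :
    IsSol n a b V r (fun x => ∑ j, c j • U j x) (fun x => ∑ j, c j • U' j x)
      (fun x => ∑ j, c j • U'' j x) := by
  refine ⟨fun x hx => ?_, fun x hx => ?_, fun x hx => ?_⟩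
  · exact HasDerivWithinAt.fun_sum fun j _ => ((h j).1 x hx).const_smul (c j)
  · exact HasDerivWithinAt.fun_sum fun j _ => ((h j).2.1 x hx).const_smul (c j)
  · have hmv : ((V x).map Complex.ofReal).mulVec (∑ j, c j • U j x)
        = ∑ j, c j • ((V x).map Complex.ofReal).mulVec (U j x) := by
      rw [← Matrix.mulVecLin_apply, map_sum]
      simp [Matrix.mulVecLin_apply]
    rw [hmv, ← Finset.sum_neg_distrib, ← Finset.sum_add_distrib]
    have : ∀ j : Fin M, -(c j • U'' j x) + c j • ((V x).map Complex.ofReal).mulVec (U j x)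
        = (r:ℂ) • (c j • U j x) := by
      intro j
      rw [← smul_neg, ← smul_add, (h j).2.2 x hx, smul_comm]
    rw [Finset.sum_congr rfl fun j _ => this j, ← Finset.smul_sum]

/-- ODE + boundary conditions with multiplier `μ`. -/
def SolBC (n : ℕ) (a b : ℝ) (V : ℝ → Matrix (Fin n) (Fin n) ℝ) (r : ℝ) (μ : ℂ)
    (u u' u'' : ℝ → Fin n → ℂ) : Prop :=
  IsSol n a b V r u u' u'' ∧ u b = μ • u a ∧ u' b = μ • u' a

/-- The space of initial data `(u a, u' a)` of solutions with multiplier `μ`. -/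
def solSpace (n : ℕ) (a b : ℝ) (V : ℝ → Matrix (Fin n) (Fin n) ℝ) (r : ℝ) (μ : ℂ) :
    Submodule ℂ ((Fin n → ℂ) × (Fin n → ℂ)) where
  carrier := {w | ∃ u u' u'', SolBC n a b V r μ u u' u'' ∧ u a = w.1 ∧ u' a = w.2}
  add_mem' := by
    rintro w w' ⟨u, u', u'', ⟨⟨s1, s2, s3⟩, b1, b2⟩, e1, e2⟩
      ⟨v, v', v'', ⟨⟨t1, t2, t3⟩, c1, c2⟩, f1, f2⟩
    refine ⟨u + v, u' + v', u'' + v'', ⟨⟨?_, ?_, ?_⟩, ?_, ?_⟩, ?_, ?_⟩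
    · exact fun x hx => (s1 x hx).add (t1 x hx)
    · exact fun x hx => (s2 x hx).add (t2 x hx)
    · intro x hx
      show -(u'' x + v'' x) + ((V x).map Complex.ofReal).mulVec (u x + v x)
          = (r:ℂ) • (u x + v x)
      rw [Matrix.mulVec_add, smul_add, ← s3 x hx, ← t3 x hx]
      abel
    · show u b + v b = μ • (u a + v a); rw [b1, c1, smul_add]
    · show u' b + v' b = μ • (u' a + v' a); rw [b2, c2, smul_add]
    · show u a + v a = w.1 + w'.1; rw [e1, f1]
    · show u' a + v' a = w.2 + w'.2; rw [e2, f2]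
  zero_mem' := by
    refine ⟨0, 0, 0, ⟨⟨?_, ?_, ?_⟩, ?_, ?_⟩, rfl, rfl⟩
    · exact fun x hx => hasDerivWithinAt_const _ _ _
    · exact fun x hx => hasDerivWithinAt_const _ _ _
    · intro x hx; simp [Matrix.mulVec_zero]
    · simp
    · simp
  smul_mem' := by
    rintro c w ⟨u, u', u'', ⟨⟨s1, s2, s3⟩, b1, b2⟩, e1, e2⟩
    refine ⟨fun x => c • u x, fun x => c • u' x, fun x => c • u'' x,
      ⟨⟨?_, ?_, ?_⟩, ?_, ?_⟩, ?_, ?_⟩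
    · exact fun x hx => (s1 x hx).const_smul c
    · exact fun x hx => (s2 x hx).const_smul c
    · intro x hx
      show -(c • u'' x) + ((V x).map Complex.ofReal).mulVec (c • u x) = (r:ℂ) • (c • u x)
      rw [Matrix.mulVec_smul, ← smul_neg, ← smul_add, s3 x hx, smul_comm]
    · show c • u b = μ • (c • u a); rw [b1, smul_comm]
    · show c • u' b = μ • (c • u' a); rw [b2, smul_comm]
    · show c • u a = c • w.1; rw [e1]
    · show c • u' a = c • w.2; rw [e2]

theorem vandermonde_smul_zero {M : ℕ} {μ : Fin M → ℂ} (hμ : Function.Injective μ)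
    {Z : Type*} [AddCommGroup Z] [Module ℂ Z] (v : Fin M → Z)
    (h : ∀ k : Fin M, ∑ j, μ j ^ (k : ℕ) • v j = 0) : ∀ j, v j = 0 := by
  set A : Matrix (Fin M) (Fin M) ℂ := (Matrix.vandermonde μ)ᵀ with hA
  have hdet : IsUnit A.det := by
    rw [hA, Matrix.det_transpose, Matrix.det_vandermonde]
    apply IsUnit.mk0
    apply Finset.prod_ne_zero_iff.2
    intro i _
    apply Finset.prod_ne_zero_iff.2
    intro j hj
    rw [Finset.mem_Ioi] at hj
    exact sub_ne_zero.2 fun hEq => absurd (hμ hEq) (ne_of_gt hj)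
  have hBA : A⁻¹ * A = 1 := Matrix.nonsing_inv_mul A hdet
  intro j
  have hz : ∀ k, ∑ j', A k j' • v j' = 0 := by
    intro k
    simpa [hA, Matrix.transpose_apply, Matrix.vandermonde] using h k
  have : v j = ∑ k, A⁻¹ j k • ∑ j', A k j' • v j' := by
    simp only [Finset.smul_sum, smul_smul]
    rw [Finset.sum_comm]
    simp only [← Finset.sum_smul, ← Matrix.mul_apply, hBA]
    simp [Matrix.one_apply]
  rw [this]
  simp [hz]

theorem indep (hab : a < b) {C : ℝ} (hC0 : 0 ≤ C)
    (hC : ∀ x ∈ Icc a b, ∀ i j, |V x i j| ≤ C)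
    {M : ℕ} {μ : Fin M → ℂ} (hμ : Function.Injective μ)
    (w : ∀ j : Fin M, solSpace n a b V r (μ j))
    (hsum : ∑ j, (w j : (Fin n → ℂ) × (Fin n → ℂ)) = 0) :
    ∀ j, (w j : (Fin n → ℂ) × (Fin n → ℂ)) = 0 := by
  have hw := fun j => (w j).2
  choose U U' U'' hU hU1 hU2 using hw
  have key : ∀ (c : Fin M → ℂ), (∑ j, c j • U j a = 0) → (∑ j, c j • U' j a = 0) →
      ∀ x ∈ Icc a b, (∑ j, c j • U j x = 0 ∧ ∑ j, c j • U' j x = 0) := by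
    intro c h1 h2 x hx
    exact sol_unique hab hC0 hC (isSol_sum c U U' U'' (fun j => (hU j).1)) h1 h2 x hx
  have hsum1 : ∑ j, U j a = 0 := by
    have := congrArg Prod.fst hsum
    rw [Prod.fst_sum] at this
    simpa [hU1] using this
  have hsum2 : ∑ j, U' j a = 0 := by
    have := congrArg Prod.snd hsum
    rw [Prod.snd_sum] at this
    simpa [hU2] using this
  have claim : ∀ k : ℕ, ∀ x ∈ Icc a b,
      (∑ j, μ j ^ k • U j x = 0 ∧ ∑ j, μ j ^ k • U' j x = 0) := by
    intro k
    induction k with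
    | zero =>
      apply key
      · simpa using hsum1
      · simpa using hsum2
    | succ k ih =>
      have hb : b ∈ Icc a b := right_mem_Icc.2 hab.le
      have e1 : ∑ j, μ j ^ (k+1) • U j a = 0 := by
        have := (ih b hb).1
        calc ∑ j, μ j ^ (k+1) • U j a = ∑ j, μ j ^ k • U j b := by
              apply Finset.sum_congr rfl
              intro j _
              rw [(hU j).2.1, smul_smul, pow_succ]
          _ = 0 := this
      have e2 : ∑ j, μ j ^ (k+1) • U' j a = 0 := by
        have := (ih b hb).2
        calc ∑ j, μ j ^ (k+1) • U' j a = ∑ j, μ j ^ k • U' j b := by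
              apply Finset.sum_congr rfl
              intro j _
              rw [(hU j).2.2, smul_smul, pow_succ]
          _ = 0 := this
      exact key _ e1 e2
  have ha : a ∈ Icc a b := left_mem_Icc.2 hab.le
  have hvand : ∀ k : Fin M, ∑ j, μ j ^ (k : ℕ) • (w j : (Fin n → ℂ) × (Fin n → ℂ)) = 0 := by
    intro k
    have h1 := (claim k a ha).1
    have h2 := (claim k a ha).2
    have : ∑ j, μ j ^ (k:ℕ) • (w j : (Fin n → ℂ) × (Fin n → ℂ))
        = (∑ j, μ j ^ (k:ℕ) • U j a, ∑ j, μ j ^ (k:ℕ) • U' j a) := by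
      rw [Prod.ext_iff]
      constructor
      · rw [Prod.fst_sum]; exact Finset.sum_congr rfl fun j _ => by simp [hU1 j]
      · rw [Prod.snd_sum]; exact Finset.sum_congr rfl fun j _ => by simp [hU2 j]
    rw [this, h1, h2]
    rfl
  exact vandermonde_smul_zero hμ _ hvand

theorem solBC_conj {μ : ℂ} {u u' u'' : ℝ → Fin n → ℂ}
    (h : SolBC n a b V r μ u u' u'') :
    SolBC n a b V r (star μ) (fun x => star (u x)) (fun x => star (u' x))
      (fun x => star (u'' x)) := by
  obtain ⟨⟨h1, h2, h3⟩, b1, b2⟩ := h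
  refine ⟨⟨fun x hx => (h1 x hx).star, fun x hx => (h2 x hx).star, ?_⟩, ?_, ?_⟩
  · intro x hx
    have h3' := h3 x hx
    funext i
    have := congrArg (fun z => (starRingEnd ℂ) (z i)) h3'
    simp only [Pi.add_apply, Pi.neg_apply, Pi.smul_apply, Matrix.mulVec, dotProduct,
      map_add, map_neg, map_sum, _root_.map_mul, smul_eq_mul, Matrix.map_apply,
      Complex.conj_ofReal] at this
    simpa [Matrix.mulVec, dotProduct, Matrix.map_apply] using this
  · show star (u b) = star μ • star (u a); rw [b1, star_smul]
  · show star (u' b) = star μ • star (u' a); rw [b2, star_smul]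

theorem conj_mem_solSpace {μ : ℂ} {w : (Fin n → ℂ) × (Fin n → ℂ)}
    (hw : w ∈ solSpace n a b V r μ) :
    (star w.1, star w.2) ∈ solSpace n a b V r (star μ) := by
  obtain ⟨u, u', u'', hbc, e1, e2⟩ := hw
  exact ⟨fun x => star (u x), fun x => star (u' x), fun x => star (u'' x),
    solBC_conj hbc, show star (u a) = star w.1 by rw [e1],
    show star (u' a) = star w.2 by rw [e2]⟩

/-- Conjugation gives an `ℝ`-linear equivalence between `solSpace μ` and `solSpace (star μ)`. -/
def conjEquiv (n : ℕ) (a b : ℝ) (V : ℝ → Matrix (Fin n) (Fin n) ℝ) (r : ℝ) (μ : ℂ) :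
    solSpace n a b V r μ ≃ₗ[ℝ] solSpace n a b V r (star μ) where
  toFun x := ⟨(star (x : (Fin n → ℂ) × (Fin n → ℂ)).1, star (x : (Fin n → ℂ) × (Fin n → ℂ)).2),
    conj_mem_solSpace x.2⟩
  invFun x := ⟨(star (x : (Fin n → ℂ) × (Fin n → ℂ)).1, star (x : (Fin n → ℂ) × (Fin n → ℂ)).2),
    by simpa using conj_mem_solSpace x.2⟩
  map_add' x y := by
    apply Subtype.ext
    simp [Prod.ext_iff, star_add]
  map_smul' c x := by
    apply Subtype.ext
    simp [Prod.ext_iff, star_smul]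
  left_inv x := by apply Subtype.ext; simp
  right_inv x := by apply Subtype.ext; simp

theorem finrank_solSpace_conj (μ : ℂ) :
    Module.finrank ℂ (solSpace n a b V r (star μ)) = Module.finrank ℂ (solSpace n a b V r μ) := by
  have h1 : Module.finrank ℝ (solSpace n a b V r μ)
      = Module.finrank ℝ (solSpace n a b V r (star μ)) :=
    (conjEquiv n a b V r μ).finrank_eq
  have e1 : Module.finrank ℝ ℂ * Module.finrank ℂ (solSpace n a b V r μ)
      = Module.finrank ℝ (solSpace n a b V r μ) := Module.finrank_mul_finrank ℝ ℂ _
  have e2 : Module.finrank ℝ ℂ * Module.finrank ℂ (solSpace n a b V r (star μ))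
      = Module.finrank ℝ (solSpace n a b V r (star μ)) := Module.finrank_mul_finrank ℝ ℂ _
  have : Module.finrank ℝ ℂ * Module.finrank ℂ (solSpace n a b V r (star μ))
      = Module.finrank ℝ ℂ * Module.finrank ℂ (solSpace n a b V r μ) := by
    rw [e1, e2, h1]
  have h2 : Module.finrank ℝ ℂ = 2 := Complex.finrank_real_complex
  rw [h2] at this
  omega

theorem sum_finrank_le (hab : a < b) {C : ℝ} (hC0 : 0 ≤ C)
    (hC : ∀ x ∈ Icc a b, ∀ i j, |V x i j| ≤ C)
    {M : ℕ} {μ : Fin M → ℂ} (hμ : Function.Injective μ) :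
    ∑ j, Module.finrank ℂ (solSpace n a b V r (μ j)) ≤ 2 * n := by
  let L : (∀ j : Fin M, solSpace n a b V r (μ j)) →ₗ[ℂ] ((Fin n → ℂ) × (Fin n → ℂ)) :=
    { toFun := fun w => ∑ j, (w j : (Fin n → ℂ) × (Fin n → ℂ))
      map_add' := by intro x y; simp [Finset.sum_add_distrib]
      map_smul' := by intro c x; simp [Finset.smul_sum] }
  have hinj : Function.Injective L := by
    rw [← LinearMap.ker_eq_bot]
    apply LinearMap.ker_eq_bot'.mpr
    intro w hw
    have := indep hab hC0 hC hμ w hw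
    funext j
    exact Subtype.ext (this j)
  have hle := LinearMap.finrank_le_finrank_of_injective hinj
  have hpi : Module.finrank ℂ (∀ j : Fin M, solSpace n a b V r (μ j))
      = ∑ j, Module.finrank ℂ (solSpace n a b V r (μ j)) :=
    Module.finrank_pi_fintype ℂ
  have hWrank : Module.finrank ℂ ((Fin n → ℂ) × (Fin n → ℂ)) = 2 * n := by
    rw [Module.finrank_prod]
    simp [Module.finrank_pi]
    ring
  rw [hpi, hWrank] at hle
  exact hle

theorem isEig_iff_solBC {θ : ℝ} {u u' u'' : ℝ → Fin n → ℂ} :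
    IsEig n a b V r θ u u' u'' ↔ SolBC n a b V r (Complex.exp (θ * Complex.I)) u u' u'' :=
  ⟨fun ⟨h1, h2, h3, h4, h5⟩ => ⟨⟨h1, h2, h3⟩, h4, h5⟩,
   fun ⟨⟨h1, h2, h3⟩, h4, h5⟩ => ⟨h1, h2, h3, h4, h5⟩⟩

theorem solBC_add {μ : ℂ} {u u' u'' v v' v'' : ℝ → Fin n → ℂ}
    (h : SolBC n a b V r μ u u' u'') (h' : SolBC n a b V r μ v v' v'') :
    SolBC n a b V r μ (fun x => u x + v x) (fun x => u' x + v' x) (fun x => u'' x + v'' x) := by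
  obtain ⟨⟨s1, s2, s3⟩, b1, b2⟩ := h
  obtain ⟨⟨t1, t2, t3⟩, c1, c2⟩ := h'
  refine ⟨⟨fun x hx => (s1 x hx).add (t1 x hx), fun x hx => (s2 x hx).add (t2 x hx), ?_⟩, ?_, ?_⟩
  · intro x hx
    show -(u'' x + v'' x) + ((V x).map Complex.ofReal).mulVec (u x + v x) = (r:ℂ) • (u x + v x)
    rw [Matrix.mulVec_add, smul_add, ← s3 x hx, ← t3 x hx]
    abel
  · show u b + v b = μ • (u a + v a); rw [b1, c1, smul_add]
  · show u' b + v' b = μ • (u' a + v' a); rw [b2, c2, smul_add]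

theorem solBC_smul {μ : ℂ} (c : ℂ) {u u' u'' : ℝ → Fin n → ℂ}
    (h : SolBC n a b V r μ u u' u'') :
    SolBC n a b V r μ (fun x => c • u x) (fun x => c • u' x) (fun x => c • u'' x) := by
  obtain ⟨⟨s1, s2, s3⟩, b1, b2⟩ := h
  refine ⟨⟨fun x hx => (s1 x hx).const_smul c, fun x hx => (s2 x hx).const_smul c, ?_⟩, ?_, ?_⟩
  · intro x hx
    show -(c • u'' x) + ((V x).map Complex.ofReal).mulVec (c • u x) = (r:ℂ) • (c • u x)
    rw [Matrix.mulVec_smul, ← smul_neg, ← smul_add, s3 x hx, smul_comm]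
  · show c • u b = μ • (c • u a); rw [b1, smul_comm]
  · show c • u' b = μ • (c • u' a); rw [b2, smul_comm]

theorem solBC_zero {μ : ℂ} :
    SolBC n a b V r μ (fun _ => (0 : Fin n → ℂ)) (fun _ => 0) (fun _ => 0) := by
  refine ⟨⟨fun x hx => hasDerivWithinAt_const _ _ _, fun x hx => hasDerivWithinAt_const _ _ _,
    ?_⟩, by simp, by simp⟩
  intro x hx; simp [Matrix.mulVec_zero]

/-- `Eset` as a submodule. -/
def Emod (n : ℕ) (a b : ℝ) (V : ℝ → Matrix (Fin n) (Fin n) ℝ) (r θ : ℝ) :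
    Submodule ℂ (Icc a b → Fin n → ℂ) where
  carrier := Eset n a b V r θ
  add_mem' := by
    rintro f g ⟨u, u', u'', hu, hf⟩ ⟨v, v', v'', hv, hg⟩
    refine ⟨fun x => u x + v x, fun x => u' x + v' x, fun x => u'' x + v'' x,
      isEig_iff_solBC.2 (solBC_add (isEig_iff_solBC.1 hu) (isEig_iff_solBC.1 hv)), ?_⟩
    intro x
    show f x + g x = u x + v x
    rw [hf x, hg x]
  zero_mem' :=
    ⟨fun _ => 0, fun _ => 0, fun _ => 0, isEig_iff_solBC.2 solBC_zero, fun x => rfl⟩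
  smul_mem' := by
    rintro c f ⟨u, u', u'', hu, hf⟩
    refine ⟨fun x => c • u x, fun x => c • u' x, fun x => c • u'' x,
      isEig_iff_solBC.2 (solBC_smul c (isEig_iff_solBC.1 hu)), ?_⟩
    intro x
    show c • f x = c • u x
    rw [hf x]

variable (hab : a ≤ b)

/-- Initial-data map. -/
def Phi (n : ℕ) (a b : ℝ) (hab : a ≤ b) (f : Icc a b → Fin n → ℂ) :
    (Fin n → ℂ) × (Fin n → ℂ) :=
  (f ⟨a, left_mem_Icc.2 hab⟩, derivWithin (IccExtend hab f) (Icc a b) a)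

theorem phi_eq (hab : a < b) {f : Icc a b → Fin n → ℂ} {u u' : ℝ → Fin n → ℂ}
    (h1 : ∀ x ∈ Icc a b, HasDerivWithinAt u (u' x) (Icc a b) x)
    (hf : ∀ x : Icc a b, f x = u x) :
    Phi n a b hab.le f = (u a, u' a) := by
  have ha : a ∈ Icc a b := left_mem_Icc.2 hab.le
  refine Prod.ext ?_ ?_
  · exact hf ⟨a, ha⟩
  · show derivWithin (IccExtend hab.le f) (Icc a b) a = u' a
    have hcongr : HasDerivWithinAt (IccExtend hab.le f) (u' a) (Icc a b) a := by
      apply (h1 a ha).congr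
      · intro y hy
        rw [IccExtend_of_mem hab.le f hy, hf ⟨y, hy⟩]
      · rw [IccExtend_of_mem hab.le f ha, hf ⟨a, ha⟩]
    exact hcongr.derivWithin (uniqueDiffOn_Icc hab a ha)

/-- The initial-data linear map out of the eigenspace. -/
def Lmap (n : ℕ) (a b : ℝ) (hab : a < b) (V : ℝ → Matrix (Fin n) (Fin n) ℝ) (r θ : ℝ) :
    Emod n a b V r θ →ₗ[ℂ] ((Fin n → ℂ) × (Fin n → ℂ)) where
  toFun f := Phi n a b hab.le f.1
  map_add' f g := by
    obtain ⟨u, u', u'', hu, hf⟩ := f.2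
    obtain ⟨v, v', v'', hv, hg⟩ := g.2
    have h1 := (isEig_iff_solBC.1 hu).1.1
    have h2 := (isEig_iff_solBC.1 hv).1.1
    have hfg : ∀ x : Icc a b, (f.1 + g.1) x = u x + v x := by
      intro x; show f.1 x + g.1 x = u x + v x; rw [hf x, hg x]
    change Phi n a b hab.le (f.1 + g.1) = Phi n a b hab.le f.1 + Phi n a b hab.le g.1
    rw [phi_eq hab (fun x hx => (h1 x hx).add (h2 x hx)) hfg,
      phi_eq hab h1 hf, phi_eq hab h2 hg]
    rfl
  map_smul' c f := by
    obtain ⟨u, u', u'', hu, hf⟩ := f.2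
    have h1 := (isEig_iff_solBC.1 hu).1.1
    have hcf : ∀ x : Icc a b, (c • f.1) x = c • u x := by
      intro x; show c • f.1 x = c • u x; rw [hf x]
    change Phi n a b hab.le (c • f.1) = c • Phi n a b hab.le f.1
    rw [phi_eq hab (fun x hx => (h1 x hx).const_smul c) hcf,
      phi_eq hab h1 hf]
    rfl

theorem range_Lmap (hab : a < b) (θ : ℝ) :
    LinearMap.range (Lmap n a b hab V r θ)
      = solSpace n a b V r (Complex.exp (θ * Complex.I)) := by
  ext w
  constructor
  · rintro ⟨f, rfl⟩
    obtain ⟨u, u', u'', hu, hf⟩ := f.2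
    have hbc := isEig_iff_solBC.1 hu
    have : Lmap n a b hab V r θ f = (u a, u' a) := phi_eq hab hbc.1.1 hf
    rw [this]
    exact ⟨u, u', u'', hbc, rfl, rfl⟩
  · rintro ⟨u, u', u'', hbc, e1, e2⟩
    have hfmem : (fun x : Icc a b => u x) ∈ Emod n a b V r θ :=
      ⟨u, u', u'', isEig_iff_solBC.2 hbc, fun x => rfl⟩
    refine ⟨⟨_, hfmem⟩, ?_⟩
    have : Lmap n a b hab V r θ ⟨_, hfmem⟩ = (u a, u' a) :=
      phi_eq hab hbc.1.1 (fun x => rfl)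
    rw [this, Prod.ext_iff]
    exact ⟨e1, e2⟩

theorem Lmap_injective (hab : a < b) {C : ℝ} (hC0 : 0 ≤ C)
    (hC : ∀ x ∈ Icc a b, ∀ i j, |V x i j| ≤ C) (θ : ℝ) :
    Function.Injective (Lmap n a b hab V r θ) := by
  rw [← LinearMap.ker_eq_bot]
  apply LinearMap.ker_eq_bot'.mpr
  intro f hLf
  obtain ⟨u, u', u'', hu, hf⟩ := f.2
  have hbc := isEig_iff_solBC.1 hu
  have hval : Lmap n a b hab V r θ f = (u a, u' a) := phi_eq hab hbc.1.1 hf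
  rw [hval, Prod.ext_iff] at hLf
  have hz := sol_unique hab hC0 hC hbc.1 hLf.1 hLf.2
  apply Subtype.ext
  funext x
  show f.1 x = 0
  rw [hf x]
  exact (hz x x.2).1

theorem finrank_Eset (hab : a < b) {C : ℝ} (hC0 : 0 ≤ C)
    (hC : ∀ x ∈ Icc a b, ∀ i j, |V x i j| ≤ C) (θ : ℝ) :
    Set.finrank ℂ (Eset n a b V r θ)
      = Module.finrank ℂ (solSpace n a b V r (Complex.exp (θ * Complex.I))) := by
  have hspan : Submodule.span ℂ (Eset n a b V r θ) = Emod n a b V r θ :=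
    Submodule.span_eq (Emod n a b V r θ)
  have e1 : Set.finrank ℂ (Eset n a b V r θ) = Module.finrank ℂ (Emod n a b V r θ) := by
    rw [Set.finrank, hspan]
  rw [e1, ← range_Lmap hab θ]
  exact (LinearEquiv.ofInjective _ (Lmap_injective hab hC0 hC θ)).finrank_eq

theorem exp_theta_inj {θ θ' : ℝ} (h1 : |θ - θ'| < 2 * Real.pi)
    (heq : Complex.exp (θ * Complex.I) = Complex.exp (θ' * Complex.I)) : θ = θ' := by
  obtain ⟨k, hk⟩ := Complex.exp_eq_exp_iff_exists_int.1 heq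
  have him : θ = θ' + (k : ℝ) * (2 * Real.pi) := by
    have := congrArg Complex.im hk
    simpa [Complex.add_im, Complex.mul_im, Complex.mul_re] using this
  have hpi := Real.pi_pos
  have hk0 : k = 0 := by
    by_contra h0
    have h1' : (1:ℝ) ≤ |(k:ℝ)| := by
      have : (1:ℤ) ≤ |k| := Int.one_le_abs (by omega)
      exact_mod_cast this
    have hd : θ - θ' = (k:ℝ) * (2*Real.pi) := by linarith
    have habs : |θ - θ'| = |(k:ℝ)| * (2*Real.pi) := by
      rw [hd, abs_mul, abs_of_pos (show (0:ℝ) < 2*Real.pi by positivity)]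
    nlinarith
  rw [hk0] at him
  simpa using him

theorem exp_ne_conj {θ θ' : ℝ}
    (hrange : (0 < θ + θ' ∧ θ + θ' < 2*Real.pi) ∨
      (2*Real.pi < θ + θ' ∧ θ + θ' < 4*Real.pi)) :
    Complex.exp (θ * Complex.I) ≠ star (Complex.exp (θ' * Complex.I)) := by
  intro heq
  have hstar : star (Complex.exp ((θ' : ℂ) * Complex.I))
      = Complex.exp (((-θ' : ℝ) : ℂ) * Complex.I) := by
    rw [show star (Complex.exp ((θ' : ℂ) * Complex.I))
        = (starRingEnd ℂ) (Complex.exp ((θ' : ℂ) * Complex.I)) from rfl, ← Complex.exp_conj]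
    congr 1
    simp [Complex.ext_iff]
  rw [hstar] at heq
  obtain ⟨k, hk⟩ := Complex.exp_eq_exp_iff_exists_int.1 heq
  have him : θ = -θ' + (k : ℝ) * (2 * Real.pi) := by
    have := congrArg Complex.im hk
    simpa [Complex.add_im, Complex.mul_im, Complex.mul_re] using this
  have he : θ + θ' = (k:ℝ) * (2*Real.pi) := by linarith
  have hpi := Real.pi_pos
  rcases hrange with ⟨hr1, hr2⟩ | ⟨hr1, hr2⟩
  · have hp1 : (0:ℝ) < (k:ℝ) := by nlinarith
    have hp2 : (k:ℝ) < 1 := by nlinarith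
    have : (0:ℤ) < k := by exact_mod_cast hp1
    have : k < 1 := by exact_mod_cast hp2
    omega
  · have hp1 : (1:ℝ) < (k:ℝ) := by nlinarith
    have hp2 : (k:ℝ) < 2 := by nlinarith
    have : (1:ℤ) < k := by exact_mod_cast hp1
    have : k < 2 := by exact_mod_cast hp2
    omega

end EigAux

/-- for a fixed `r` and pairwise distinct `θ₁, …, θ_m` all lying in `(0,π)`,
or all lying in `(π,2π)`, one has `Σ_j dim_ℂ E(r,θ_j) ≤ n`. -/
theorem eigenspaces_dim_sum_le_n (n : ℕ) (hn : 1 ≤ n) (a b : ℝ) (hab : a < b)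
    (V : ℝ → Matrix (Fin n) (Fin n) ℝ)
    (hVcont : ∀ i j, ContinuousOn (fun x => V x i j) (Icc a b))
    (hVsymm : ∀ x ∈ Icc a b, (V x)ᵀ = V x)
    (r : ℝ) (m : ℕ) (θs : Fin m → ℝ)
    (hmem : (∀ j, θs j ∈ Ioo (0 : ℝ) Real.pi) ∨
            (∀ j, θs j ∈ Ioo Real.pi (2 * Real.pi)))
    (hinj : Function.Injective θs) :
    ∑ j, Set.finrank ℂ (Eset n a b V r (θs j)) ≤ n := by
  classical
  have hpi := Real.pi_pos
  -- uniform bound on V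
  obtain ⟨C₀, hC₀⟩ := IsCompact.exists_bound_of_continuousOn isCompact_Icc
    (f := fun x (ij : Fin n × Fin n) => V x ij.1 ij.2)
    (continuousOn_pi.2 fun ij => hVcont ij.1 ij.2)
  set C : ℝ := max C₀ 0 with hCdef
  have hC0 : 0 ≤ C := le_max_right _ _
  have hC : ∀ x ∈ Icc a b, ∀ i j, |V x i j| ≤ C := by
    intro x hx i j
    have h1 : |V x i j| ≤ ‖fun ij : Fin n × Fin n => V x ij.1 ij.2‖ := by
      have := norm_le_pi_norm (fun ij : Fin n × Fin n => V x ij.1 ij.2) (i, j)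
      simpa [Real.norm_eq_abs] using this
    exact le_trans (le_trans h1 (hC₀ x hx)) (le_max_left _ _)
  set μ : Fin m → ℂ := fun j => Complex.exp (θs j * Complex.I) with hμdef
  set μe : Fin m ⊕ Fin m → ℂ := Sum.elim μ (fun j => star (μ j)) with hμe
  -- injectivity of the combined family
  have hμinj : Function.Injective μe := by
    have hne : ∀ j k, μ j ≠ star (μ k) := by
      intro j k
      apply EigAux.exp_ne_conj
      rcases hmem with hm | hm
      · left
        obtain ⟨p1, p2⟩ := hm j
        obtain ⟨q1, q2⟩ := hm k
        constructor <;> nlinarith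
      · right
        obtain ⟨p1, p2⟩ := hm j
        obtain ⟨q1, q2⟩ := hm k
        constructor <;> nlinarith
    have habs : ∀ j k : Fin m, |θs j - θs k| < 2 * Real.pi := by
      intro j k
      rw [abs_sub_lt_iff]
      rcases hmem with hm | hm
      · obtain ⟨p1, p2⟩ := hm j
        obtain ⟨q1, q2⟩ := hm k
        constructor <;> nlinarith
      · obtain ⟨p1, p2⟩ := hm j
        obtain ⟨q1, q2⟩ := hm k
        constructor <;> nlinarith
    have hμ0 : Function.Injective μ := by
      intro j k h
      exact hinj (EigAux.exp_theta_inj (habs j k) h)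
    rintro (j | j) (k | k) h
    · exact congrArg Sum.inl (hμ0 h)
    · exact absurd h (hne j k)
    · exact absurd ((h : star (μ j) = μ k)).symm (hne k j)
    · have h' : star (μ j) = star (μ k) := h
      have hjk : μ j = μ k := by
        have := congrArg star h'
        simpa using this
      exact congrArg Sum.inr (hμ0 hjk)
  -- combined family indexed by `Fin (m + m)`
  set μ2 : Fin (m + m) → ℂ := fun i => μe (finSumFinEquiv.symm i) with hμ2
  have hμ2inj : Function.Injective μ2 := hμinj.comp finSumFinEquiv.symm.injective
  have hbound := EigAux.sum_finrank_le (V := V) (r := r) hab hC0 hC hμ2inj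
  have hsum : ∑ i : Fin (m + m), Module.finrank ℂ (EigAux.solSpace n a b V r (μ2 i))
      = ∑ s : Fin m ⊕ Fin m, Module.finrank ℂ (EigAux.solSpace n a b V r (μe s)) :=
    Equiv.sum_comp finSumFinEquiv.symm
      (fun s => Module.finrank ℂ (EigAux.solSpace n a b V r (μe s)))
  rw [hsum, Fintype.sum_sum_type] at hbound
  have hconj : ∀ j, Module.finrank ℂ (EigAux.solSpace n a b V r (star (μ j)))
      = Module.finrank ℂ (EigAux.solSpace n a b V r (μ j)) :=
    fun j => EigAux.finrank_solSpace_conj (μ j)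
  have hEset : ∀ j, Set.finrank ℂ (Eset n a b V r (θs j))
      = Module.finrank ℂ (EigAux.solSpace n a b V r (μ j)) :=
    fun j => EigAux.finrank_Eset hab hC0 hC (θs j)
  have hL : ∑ s : Fin m, Module.finrank ℂ (EigAux.solSpace n a b V r (μe (Sum.inl s)))
      = ∑ j, Set.finrank ℂ (Eset n a b V r (θs j)) := by
    apply Finset.sum_congr rfl
    intro j _
    rw [hEset j]
    rfl
  have hR : ∑ s : Fin m, Module.finrank ℂ (EigAux.solSpace n a b V r (μe (Sum.inr s)))
      = ∑ j, Set.finrank ℂ (Eset n a b V r (θs j)) := by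
    apply Finset.sum_congr rfl
    intro j _
    rw [hEset j]
    have : μe (Sum.inr j) = star (μ j) := rfl
    rw [this, hconj j]
  rw [hL, hR] at hbound
  omega
end
end

section
/- Fix r ∈ ℝ. Let ϑ₁, …, ϑ_n ∈ (0,π) (not necessarily distinct) and let u₁, …, u_n be ℂ-linearly independent functions such that u_k ∈ E(r,ϑ_k) for each 1 ≤ k ≤ n. If θ ∈ (0,π) and u ∈ E(r,θ), then u lies in the ℂ-linear span of u₁, …, u_n. -/
open Set Matrix

noncomputable section

/-- Restriction of a function on `ℝ` to the interval `[a,b]`. -/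
def restrictIcc (n : ℕ) (a b : ℝ) (u : ℝ → Fin n → ℂ) : Icc a b → Fin n → ℂ :=
  fun x => u x

/-- The complex-bilinear symplectic/Wronskian form on initial data. -/
def Bform (n : ℕ) : ((Fin n → ℂ) × (Fin n → ℂ)) →ₗ[ℂ] ((Fin n → ℂ) × (Fin n → ℂ)) →ₗ[ℂ] ℂ :=
  LinearMap.mk₂ ℂ (fun p q => p.2 ⬝ᵥ q.1 - p.1 ⬝ᵥ q.2)
    (by intro p p' q; simp [add_dotProduct]; ring)
    (by intro c p q; simp [smul_dotProduct]; ring)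
    (by intro p q q'; simp [dotProduct_add]; ring)
    (by intro c p q; simp [dotProduct_smul]; ring)

lemma Bform_nondeg {n : ℕ} (p : (Fin n → ℂ) × (Fin n → ℂ))
    (h : ∀ q, Bform n p q = 0) : p = 0 := by
  have h1 : ∀ i, p.1 i = 0 := by
    intro i
    have := h (0, Pi.single i 1)
    simpa [Bform, dotProduct_single] using this
  have h2 : ∀ i, p.2 i = 0 := by
    intro i
    have := h (Pi.single i 1, 0)
    simpa [Bform, dotProduct_single] using this
  ext i
  · exact h1 i
  · exact h2 i

lemma isotropic_dep {n : ℕ} (d : Fin (n + 1) → (Fin n → ℂ) × (Fin n → ℂ))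
    (h : ∀ j k, Bform n (d j) (d k) = 0) : ¬ LinearIndependent ℂ d := by
  intro hli
  have hfinP : Module.finrank ℂ ((Fin n → ℂ) × (Fin n → ℂ)) = n + n := by
    simp [Module.finrank_prod]
  have hφli : LinearIndependent ℂ (fun k => Bform n (d k)) := by
    rw [Fintype.linearIndependent_iff]
    intro c hc k
    have h0 : Bform n (∑ k, c k • d k) = 0 := by
      rw [map_sum]
      simpa using hc
    have : (∑ k, c k • d k) = 0 := by
      apply Bform_nondeg
      intro q
      rw [h0]; rfl
    exact (Fintype.linearIndependent_iff.mp hli) c this k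
  set Φ : Submodule ℂ (Module.Dual ℂ ((Fin n → ℂ) × (Fin n → ℂ))) := Submodule.span ℂ (Set.range (fun k => Bform n (d k)))
  have hΦrank : Module.finrank ℂ Φ = n + 1 := by
    rw [finrank_span_eq_card hφli, Fintype.card_fin]
  have hsub : Submodule.span ℂ (Set.range d) ≤ Φ.dualCoannihilator := by
    rw [Submodule.span_le]
    rintro _ ⟨j, rfl⟩
    rw [SetLike.mem_coe, Submodule.mem_dualCoannihilator]
    intro φ hφ
    induction hφ using Submodule.span_induction with
    | mem x hx => obtain ⟨k, rfl⟩ := hx; exact h k j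
    | zero => rfl
    | add x y _ _ hx hy => simp [hx, hy]
    | smul c x _ hx => simp [hx]
  have hd : Module.finrank ℂ (Submodule.span ℂ (Set.range d)) = n + 1 := by
    rw [finrank_span_eq_card hli, Fintype.card_fin]
  have h1 : n + 1 ≤ Module.finrank ℂ Φ.dualCoannihilator := by
    rw [← hd]; exact Submodule.finrank_mono hsub
  have h2 := Subspace.finrank_add_finrank_dualCoannihilator_eq Φ
  rw [hΦrank, hfinP] at h2
  omega


lemma mulVec_norm_le {n : ℕ} (M : Matrix (Fin n) (Fin n) ℂ) (C : ℝ) (hC : 0 ≤ C)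
    (hM : ∀ i j, ‖M i j‖ ≤ C) (y : Fin n → ℂ) : ‖M.mulVec y‖ ≤ (n * C) * ‖y‖ := by
  rw [pi_norm_le_iff_of_nonneg (by positivity)]
  intro i
  calc ‖M.mulVec y i‖ = ‖∑ j, M i j * y j‖ := rfl
    _ ≤ ∑ j, ‖M i j * y j‖ := norm_sum_le _ _
    _ ≤ ∑ _j : Fin n, C * ‖y‖ := by
        apply Finset.sum_le_sum
        intro j _
        rw [norm_mul]
        exact mul_le_mul (hM i j) (norm_le_pi_norm y j) (norm_nonneg _) hC
    _ = (n * C) * ‖y‖ := by simp [Finset.sum_const]; ring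

/-- Uniqueness: a solution of `-p'' + V p = r p` on `[a,b]` with zero initial data vanishes. -/
lemma sol_zero_of_init {n : ℕ} {a b : ℝ} (hab : a < b) {V : ℝ → Matrix (Fin n) (Fin n) ℝ}
    (hVcont : ∀ i j, ContinuousOn (fun x => V x i j) (Icc a b)) (r : ℝ)
    {p p' p'' : ℝ → Fin n → ℂ}
    (hd1 : ∀ x ∈ Icc a b, HasDerivWithinAt p (p' x) (Icc a b) x)
    (hd2 : ∀ x ∈ Icc a b, HasDerivWithinAt p' (p'' x) (Icc a b) x)
    (heq : ∀ x ∈ Icc a b, -p'' x + ((V x).map Complex.ofReal).mulVec (p x) = (r : ℂ) • p x)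
    (h0 : p a = 0) (h0' : p' a = 0) : ∀ x ∈ Icc a b, p x = 0 := by
  -- a uniform bound on the entries of V over Icc a b
  obtain ⟨C, hC0, hC⟩ : ∃ C : ℝ, 0 ≤ C ∧ ∀ x ∈ Icc a b, ∀ i j, |V x i j| ≤ C := by
    by_cases hn : n = 0
    · subst hn; exact ⟨0, le_refl 0, fun x _ i => i.elim0⟩
    haveI : Nonempty (Fin n) := ⟨⟨0, Nat.pos_of_ne_zero hn⟩⟩
    have hbd : ∀ ij : Fin n × Fin n, ∃ C : ℝ, ∀ x ∈ Icc a b, |V x ij.1 ij.2| ≤ C := by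
      intro ij
      obtain ⟨C, hC⟩ := (isCompact_Icc.exists_bound_of_continuousOn (hVcont ij.1 ij.2))
      exact ⟨C, fun x hx => by simpa using hC x hx⟩
    choose Cf hCf using hbd
    refine ⟨max 0 (Finset.univ.sup' Finset.univ_nonempty Cf), le_max_left _ _, ?_⟩
    intro x hx i j
    exact le_trans (hCf (i, j) x hx) (le_trans (Finset.le_sup' _ (Finset.mem_univ (i, j))) (le_max_right _ _))
  set A : ℝ → (Fin n → ℂ) → (Fin n → ℂ) :=
    fun t y => ((V t).map Complex.ofReal).mulVec y - (r : ℂ) • y with hA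
  set v : ℝ → ((Fin n → ℂ) × (Fin n → ℂ)) → ((Fin n → ℂ) × (Fin n → ℂ)) :=
    fun t q => if t ∈ Icc a b then (q.2, A t q.1) else 0 with hv_def
  have hK0 : (0:ℝ) ≤ max 1 (n * C + |r|) := le_trans zero_le_one (le_max_left _ _)
  set K : NNReal := ⟨max 1 (n * C + |r|), hK0⟩ with hK
  have hlip : ∀ t, LipschitzOnWith K (v t) univ := by
    intro t
    apply LipschitzWith.lipschitzOnWith
    apply LipschitzWith.of_dist_le_mul
    intro x y
    by_cases ht : t ∈ Icc a b
    · simp only [hv_def, if_pos ht]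
      rw [Prod.dist_eq]
      apply max_le
      · have hK1 : (1:ℝ) ≤ (K:ℝ) := le_max_left _ _
        calc dist x.2 y.2 ≤ dist x y :=
              le_trans (le_max_right _ _) (le_of_eq (Prod.dist_eq (x := x) (y := y)).symm)
          _ ≤ K * dist x y := le_mul_of_one_le_left dist_nonneg hK1
      · have hb : ∀ i j, ‖((V t).map Complex.ofReal) i j‖ ≤ C := by
          intro i j
          simp only [Matrix.map_apply, Complex.norm_real]
          exact hC t ht i j
        have h1 : dist (A t x.1) (A t y.1) ≤ (n * C + |r|) * dist x.1 y.1 := by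
          rw [dist_eq_norm, dist_eq_norm]
          have : A t x.1 - A t y.1 =
              ((V t).map Complex.ofReal).mulVec (x.1 - y.1) - (r : ℂ) • (x.1 - y.1) := by
            simp [hA, Matrix.mulVec_sub, smul_sub]
            abel
          rw [this]
          calc ‖((V t).map Complex.ofReal).mulVec (x.1 - y.1) - (r : ℂ) • (x.1 - y.1)‖
              ≤ ‖((V t).map Complex.ofReal).mulVec (x.1 - y.1)‖ + ‖(r : ℂ) • (x.1 - y.1)‖ :=
                norm_sub_le _ _
            _ ≤ (n * C) * ‖x.1 - y.1‖ + |r| * ‖x.1 - y.1‖ := by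
                apply add_le_add (mulVec_norm_le _ C hC0 hb _)
                rw [norm_smul]
                apply mul_le_mul_of_nonneg_right _ (norm_nonneg _)
                simp
            _ = (n * C + |r|) * ‖x.1 - y.1‖ := by ring
        calc dist (A t x.1) (A t y.1) ≤ (n * C + |r|) * dist x.1 y.1 := h1
          _ ≤ K * dist x y := by
              have h2 : dist x.1 y.1 ≤ dist x y :=
                le_trans (le_max_left _ _) (le_of_eq (Prod.dist_eq (x := x) (y := y)).symm)
              have h3 : (n * C + |r|) ≤ (K : ℝ) := le_max_right _ _
              have h4 : (0:ℝ) ≤ n * C + |r| := by positivity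
              nlinarith [dist_nonneg (x := x) (y := y)]
    · simp only [hv_def, if_neg ht]
      simp
      positivity
  set f : ℝ → (Fin n → ℂ) × (Fin n → ℂ) := fun t => (p t, p' t) with hf_def
  have key : EqOn f (fun _ => (0 : (Fin n → ℂ) × (Fin n → ℂ))) (Icc a b) := by
    apply ODE_solution_unique_of_mem_Icc_right (s := fun _ => univ) (fun t _ => hlip t)
    · exact ContinuousOn.prodMk (fun x hx => (hd1 x hx).continuousWithinAt) (fun x hx => (hd2 x hx).continuousWithinAt)
    · intro t ht
      have htI : t ∈ Icc a b := ⟨ht.1, le_of_lt ht.2⟩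
      have hder : HasDerivWithinAt f (p' t, p'' t) (Icc a b) t :=
        HasDerivWithinAt.prodMk (hd1 t htI) (hd2 t htI)
      have heq' : v t (f t) = (p' t, p'' t) := by
        simp only [hv_def, if_pos htI, hf_def]
        have hpp : p'' t = ((V t).map Complex.ofReal).mulVec (p t) - (r : ℂ) • p t := by
          have hcomp0 := heq t htI
          funext i
          have hcomp := congrFun hcomp0 i
          simp only [Pi.add_apply, Pi.neg_apply, Pi.sub_apply, Pi.smul_apply] at hcomp ⊢
          linear_combination -hcomp
        rw [hpp]
      rw [heq']
      exact hder.mono_of_mem_nhdsWithin (Icc_mem_nhdsGE_of_mem ht)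
    · intro t _; trivial
    · exact continuousOn_const
    · intro t ht
      have htI : t ∈ Icc a b := ⟨ht.1, le_of_lt ht.2⟩
      have hz : v t (0 : (Fin n → ℂ) × (Fin n → ℂ)) = 0 := by
        simp [hv_def, if_pos htI, hA]
      rw [hz]
      exact hasDerivWithinAt_const _ _ _
    · intro t _; trivial
    · simp only [hf_def, h0, h0']
      rfl
  intro x hx
  have := key hx
  simpa [hf_def, Prod.ext_iff] using congrArg Prod.fst this

lemma symm_dot {n : ℕ} (M : Matrix (Fin n) (Fin n) ℂ) (hM : Mᵀ = M) (y z : Fin n → ℂ) :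
    (M.mulVec y) ⬝ᵥ z = y ⬝ᵥ (M.mulVec z) := by
  calc M.mulVec y ⬝ᵥ z = z ⬝ᵥ M.mulVec y := dotProduct_comm _ _
    _ = (z ᵥ* M) ⬝ᵥ y := dotProduct_mulVec _ _ _
    _ = (z ᵥ* Mᵀᵀ) ⬝ᵥ y := by rw [transpose_transpose]
    _ = (Mᵀ *ᵥ z) ⬝ᵥ y := by rw [vecMul_transpose]
    _ = (M *ᵥ z) ⬝ᵥ y := by rw [hM]
    _ = y ⬝ᵥ M.mulVec z := dotProduct_comm _ _

lemma wronskian_zero {n : ℕ} {a b : ℝ} (hab : a < b) {V : ℝ → Matrix (Fin n) (Fin n) ℝ}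
    (hVsymm : ∀ x ∈ Icc a b, (V x)ᵀ = V x) {r θ₁ θ₂ : ℝ}
    (hsum : 0 < θ₁ + θ₂) (hsum' : θ₁ + θ₂ < 2 * Real.pi)
    {u u' u'' v v' v'' : ℝ → Fin n → ℂ}
    (h1 : IsEig n a b V r θ₁ u u' u'') (h2 : IsEig n a b V r θ₂ v v' v'') :
    u' a ⬝ᵥ v a - u a ⬝ᵥ v' a = 0 := by
  obtain ⟨hu1, hu2, hueq, hub, hub'⟩ := h1
  obtain ⟨hv1, hv2, hveq, hvb, hvb'⟩ := h2
  set W : ℝ → ℂ := fun x => u' x ⬝ᵥ v x - u x ⬝ᵥ v' x with hW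
  have hWd : ∀ x ∈ Icc a b, HasDerivWithinAt W 0 (Icc a b) x := by
    intro x hx
    set M := (V x).map Complex.ofReal with hM
    have hMsymm : Mᵀ = M := by
      rw [hM, ← Matrix.transpose_map, hVsymm x hx]
    have hu'' : u'' x = M.mulVec (u x) - (r : ℂ) • u x := by
      have h := hueq x hx; funext i
      have := congrFun h i
      simp only [Pi.add_apply, Pi.neg_apply, Pi.sub_apply, Pi.smul_apply] at this ⊢
      linear_combination -this
    have hv'' : v'' x = M.mulVec (v x) - (r : ℂ) • v x := by
      have h := hveq x hx; funext i
      have := congrFun h i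
      simp only [Pi.add_apply, Pi.neg_apply, Pi.sub_apply, Pi.smul_apply] at this ⊢
      linear_combination -this
    have hd1 : HasDerivWithinAt (fun x => u' x ⬝ᵥ v x)
        (u'' x ⬝ᵥ v x + u' x ⬝ᵥ v' x) (Icc a b) x := by
      simp only [dotProduct]
      rw [← Finset.sum_add_distrib]
      apply HasDerivWithinAt.fun_sum
      intro i _
      exact ((hasDerivWithinAt_pi.1 (hu2 x hx)) i).mul ((hasDerivWithinAt_pi.1 (hv1 x hx)) i)
    have hd2 : HasDerivWithinAt (fun x => u x ⬝ᵥ v' x)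
        (u' x ⬝ᵥ v' x + u x ⬝ᵥ v'' x) (Icc a b) x := by
      simp only [dotProduct]
      rw [← Finset.sum_add_distrib]
      apply HasDerivWithinAt.fun_sum
      intro i _
      exact ((hasDerivWithinAt_pi.1 (hu1 x hx)) i).mul ((hasDerivWithinAt_pi.1 (hv2 x hx)) i)
    have hcalc : (u'' x ⬝ᵥ v x + u' x ⬝ᵥ v' x) - (u' x ⬝ᵥ v' x + u x ⬝ᵥ v'' x) = 0 := by
      rw [hu'', hv'']
      rw [sub_dotProduct, dotProduct_sub, smul_dotProduct, dotProduct_smul,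
        symm_dot M hMsymm (u x) (v x)]
      ring
    have := hd1.sub hd2
    rwa [hcalc] at this
  have hWba : W b = W a := by
    have hconst := constant_of_has_deriv_right_zero (a := a) (b := b) (f := W)
      (fun x hx => (hWd x hx).continuousWithinAt)
      (fun x hx => (hWd x ⟨hx.1, le_of_lt hx.2⟩).mono_of_mem_nhdsWithin
        (Icc_mem_nhdsGE_of_mem hx))
    exact hconst b ⟨le_of_lt hab, le_refl b⟩
  have hWb : W b = Complex.exp ((θ₁ + θ₂ : ℝ) * Complex.I) * W a := by
    simp only [hW, hub, hub', hvb, hvb', smul_dotProduct, dotProduct_smul, smul_eq_mul]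
    rw [show ((θ₁ + θ₂ : ℝ) : ℂ) * Complex.I = θ₁ * Complex.I + θ₂ * Complex.I by push_cast; ring,
      Complex.exp_add]
    ring
  have hne : Complex.exp ((θ₁ + θ₂ : ℝ) * Complex.I) ≠ 1 := by
    intro hE
    obtain ⟨k, hk⟩ := Complex.exp_eq_one_iff.1 hE
    have hfac : (((θ₁ + θ₂ : ℝ) : ℂ) - (k : ℂ) * (2 * Real.pi)) * Complex.I = 0 := by
      push_cast at hk ⊢
      linear_combination hk
    have : ((θ₁ + θ₂ : ℝ) : ℂ) = (k : ℂ) * (2 * Real.pi) := by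
      rcases mul_eq_zero.1 hfac with h | h
      · push_cast at h ⊢; linear_combination h
      · exact absurd h Complex.I_ne_zero
    have hreal : θ₁ + θ₂ = (k : ℝ) * (2 * Real.pi) := by
      exact_mod_cast this
    have hπ := Real.pi_pos
    rcases lt_trichotomy (k : ℝ) 0 with hk0 | hk0 | hk0
    · nlinarith
    · rw [hk0] at hreal; nlinarith
    · have : (1 : ℝ) ≤ (k : ℝ) := by exact_mod_cast (by exact_mod_cast hk0 : (0:ℤ) < k)
      nlinarith
  have : (Complex.exp ((θ₁ + θ₂ : ℝ) * Complex.I) - 1) * W a = 0 := by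
    rw [sub_mul, one_mul, ← hWb, hWba, sub_self]
  rcases mul_eq_zero.1 this with h | h
  · exact absurd (by linear_combination h) hne
  · exact h


/-- if `ϑ₁, …, ϑ_n ∈ (0,π)` and `u₁, …, u_n` are ℂ-linearly independent
functions on `[a,b]` with `u_k ∈ E(r,ϑ_k)`, then every eigenfunction `u ∈ E(r,θ)` with
`θ ∈ (0,π)` lies in the ℂ-linear span of `u₁, …, u_n`. -/
theorem eigenfunction_mem_span (n : ℕ) (hn : 1 ≤ n) (a b : ℝ) (hab : a < b)
    (V : ℝ → Matrix (Fin n) (Fin n) ℝ)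
    (hVcont : ∀ i j, ContinuousOn (fun x => V x i j) (Icc a b))
    (hVsymm : ∀ x ∈ Icc a b, (V x)ᵀ = V x)
    (r : ℝ) (ϑ : Fin n → ℝ) (hϑ : ∀ k, ϑ k ∈ Ioo (0 : ℝ) Real.pi)
    (u : Fin n → ℝ → Fin n → ℂ)
    (heig : ∀ k, ∃ u' u'', IsEig n a b V r (ϑ k) (u k) u' u'')
    (hli : LinearIndependent ℂ (fun k => restrictIcc n a b (u k)))
    (θ : ℝ) (hθ : θ ∈ Ioo (0 : ℝ) Real.pi)
    (w : ℝ → Fin n → ℂ) (hw : ∃ w' w'', IsEig n a b V r θ w w' w'') :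
    restrictIcc n a b w ∈
      Submodule.span ℂ (Set.range (fun k => restrictIcc n a b (u k))) := by
  choose u' u'' hueig using heig
  obtain ⟨w', w'', hweig⟩ := hw
  set eu : Fin (n + 1) → ℝ → Fin n → ℂ := Fin.snoc u w with heu
  set eu' : Fin (n + 1) → ℝ → Fin n → ℂ := Fin.snoc u' w' with heu'
  set eu'' : Fin (n + 1) → ℝ → Fin n → ℂ := Fin.snoc u'' w'' with heu''
  set θf : Fin (n + 1) → ℝ := Fin.snoc ϑ θ with hθf
  have heigAll : ∀ k, IsEig n a b V r (θf k) (eu k) (eu' k) (eu'' k) := by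
    intro k
    refine Fin.lastCases ?_ ?_ k
    · simp only [heu, heu', heu'', hθf, Fin.snoc_last]; exact hweig
    · intro i; simp only [heu, heu', heu'', hθf, Fin.snoc_castSucc]; exact hueig i
  have hθAll : ∀ k, θf k ∈ Ioo (0 : ℝ) Real.pi := by
    intro k
    refine Fin.lastCases ?_ ?_ k
    · simp only [hθf, Fin.snoc_last]; exact hθ
    · intro i; simp only [hθf, Fin.snoc_castSucc]; exact hϑ i
  set d : Fin (n + 1) → (Fin n → ℂ) × (Fin n → ℂ) := fun k => (eu k a, eu' k a) with hd
  have hB : ∀ j k, Bform n (d j) (d k) = 0 := by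
    intro j k
    have hj := hθAll j; have hk := hθAll k
    have := wronskian_zero (θ₁ := θf j) (θ₂ := θf k) hab hVsymm
      (by linarith [hj.1, hk.1]) (by linarith [hj.2, hk.2]) (heigAll j) (heigAll k)
    simpa [Bform, hd] using this
  obtain ⟨c, hc0, k0, hk0⟩ := Fintype.not_linearIndependent_iff.1 (isotropic_dep d hB)
  -- the combined function solves the ODE with zero initial data
  set p : ℝ → Fin n → ℂ := fun x => ∑ k, c k • eu k x with hp
  set p' : ℝ → Fin n → ℂ := fun x => ∑ k, c k • eu' k x with hp'
  set p'' : ℝ → Fin n → ℂ := fun x => ∑ k, c k • eu'' k x with hp''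
  have hpa : p a = 0 := by
    have h1 := congrArg Prod.fst hc0
    rw [Prod.fst_sum] at h1
    simpa [hd, hp] using h1
  have hpa' : p' a = 0 := by
    have h1 := congrArg Prod.snd hc0
    rw [Prod.snd_sum] at h1
    simpa [hd, hp'] using h1
  have hd1 : ∀ x ∈ Icc a b, HasDerivWithinAt p (p' x) (Icc a b) x := by
    intro x hx
    exact HasDerivWithinAt.fun_sum fun k _ => ((heigAll k).1 x hx).const_smul (c k)
  have hd2 : ∀ x ∈ Icc a b, HasDerivWithinAt p' (p'' x) (Icc a b) x := by
    intro x hx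
    exact HasDerivWithinAt.fun_sum fun k _ => ((heigAll k).2.1 x hx).const_smul (c k)
  have heqp : ∀ x ∈ Icc a b,
      -p'' x + ((V x).map Complex.ofReal).mulVec (p x) = (r : ℂ) • p x := by
    intro x hx
    have hM : ((V x).map Complex.ofReal).mulVec (p x)
        = ∑ k, c k • (((V x).map Complex.ofReal).mulVec (eu k x)) := by
      rw [hp, ← Matrix.mulVecLin_apply, map_sum]
      simp [Matrix.mulVecLin_apply]
    calc -p'' x + ((V x).map Complex.ofReal).mulVec (p x)
        = ∑ k, c k • (-eu'' k x + ((V x).map Complex.ofReal).mulVec (eu k x)) := by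
          rw [hM, hp'']
          rw [Finset.sum_congr rfl
            (fun k _ => smul_add (c k) (-eu'' k x) (((V x).map Complex.ofReal).mulVec (eu k x))),
            Finset.sum_add_distrib]
          simp [smul_neg, Finset.sum_neg_distrib]
      _ = ∑ k, c k • ((r : ℂ) • eu k x) := by
          exact Finset.sum_congr rfl fun k _ => by rw [(heigAll k).2.2.1 x hx]
      _ = (r : ℂ) • p x := by
          rw [hp, Finset.smul_sum]
          exact Finset.sum_congr rfl fun k _ => smul_comm _ _ _
  have hzero := sol_zero_of_init hab hVcont r hd1 hd2 heqp hpa hpa'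
  -- turn this into an equation between restricted functions
  have hfun : ∑ k, c k • restrictIcc n a b (eu k) = 0 := by
    funext x
    have h1 := hzero x x.2
    simp only [hp] at h1
    simpa [restrictIcc, Finset.sum_apply, Pi.smul_apply] using h1
  rw [Fin.sum_univ_castSucc] at hfun
  have heuc : ∀ k : Fin n, restrictIcc n a b (eu k.castSucc) = restrictIcc n a b (u k) := by
    intro k; simp [heu, restrictIcc, Fin.snoc_castSucc]
  have heul : restrictIcc n a b (eu (Fin.last n)) = restrictIcc n a b w := by
    simp [heu, restrictIcc, Fin.snoc_last]
  rw [heul, Finset.sum_congr rfl (fun k _ => by rw [heuc k])] at hfun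
  by_cases hcl : c (Fin.last n) = 0
  · exfalso
    rw [hcl, zero_smul, add_zero] at hfun
    have hall := Fintype.linearIndependent_iff.1 hli (fun k => c k.castSucc) hfun
    refine hk0 ?_
    refine Fin.lastCases ?_ ?_ k0
    · exact hcl
    · exact hall
  · have : restrictIcc n a b w
        = (-(c (Fin.last n))⁻¹) • ∑ k : Fin n, c k.castSucc • restrictIcc n a b (u k) := by
      have h2 : c (Fin.last n) • restrictIcc n a b w
          = -∑ k : Fin n, c k.castSucc • restrictIcc n a b (u k) := by
        rw [← neg_eq_of_add_eq_zero_right hfun]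
      calc restrictIcc n a b w
          = (c (Fin.last n))⁻¹ • (c (Fin.last n) • restrictIcc n a b w) := by
            rw [smul_smul, inv_mul_cancel₀ hcl, one_smul]
        _ = (-(c (Fin.last n))⁻¹) • ∑ k : Fin n, c k.castSucc • restrictIcc n a b (u k) := by
            rw [h2, smul_neg, ← neg_smul]
    rw [this]
    refine Submodule.smul_mem _ _ (Submodule.sum_mem _ fun k _ => Submodule.smul_mem _ _ ?_)
    exact Submodule.subset_span ⟨k, rfl⟩
end
end

section
/- The ℂ-vector subspace of functions [a,b] → ℂ^n spanned by the union over all θ ∈ (0,π) of the spaces E(r,θ) has dimension at most n, for every fixed r ∈ ℝ. -/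
open Set Matrix

noncomputable section

/-! ### Auxiliary lemmas -/

/-- Upgrade a derivative within `Icc a b` to a derivative within `Ici t` for `t ∈ Ico a b`. -/
lemma hderIci' {E : Type*} [NormedAddCommGroup E] [NormedSpace ℝ E] {f : ℝ → E} {d : E}
    {a b t : ℝ} (ht : t ∈ Ico a b) (h : HasDerivWithinAt f d (Icc a b) t) :
    HasDerivWithinAt f d (Ici t) t := by
  refine h.mono_of_mem_nhdsWithin ?_
  refine mem_nhdsWithin.mpr ⟨Iio b, isOpen_Iio, ht.2, ?_⟩
  rintro x ⟨hx1, hx2⟩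
  exact ⟨le_trans ht.1 hx2, le_of_lt hx1⟩

/-- Rank comparison via kernels. -/
lemma rank_chase {Q A B' : Type*} [AddCommGroup Q] [Module ℂ Q] [AddCommGroup A] [Module ℂ A]
    [AddCommGroup B'] [Module ℂ B'] [FiniteDimensional ℂ A]
    (f : Q →ₗ[ℂ] A) (g : Q →ₗ[ℂ] B') (h : LinearMap.ker f ≤ LinearMap.ker g) :
    FiniteDimensional ℂ (LinearMap.range g) ∧
      Module.finrank ℂ (LinearMap.range g) ≤ Module.finrank ℂ (LinearMap.range f) := by
  have e := f.quotKerEquivRange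
  haveI : FiniteDimensional ℂ (Q ⧸ LinearMap.ker f) := Module.Finite.equiv e.symm
  set g' : (Q ⧸ LinearMap.ker f) →ₗ[ℂ] B' := Submodule.liftQ _ g h with hg'
  have hrange : LinearMap.range g' = LinearMap.range g := Submodule.range_liftQ _ _ _
  constructor
  · rw [← hrange]; infer_instance
  · rw [← hrange]
    calc Module.finrank ℂ (LinearMap.range g') ≤ Module.finrank ℂ (Q ⧸ LinearMap.ker f) :=
          g'.finrank_range_le
      _ = Module.finrank ℂ (LinearMap.range f) := e.finrank_eq

/-- A uniform operator-norm bound for the continuous matrix potential on `[a,b]`. -/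
lemma mulVec_bound {n : ℕ} {a b : ℝ} (V : ℝ → Matrix (Fin n) (Fin n) ℝ)
    (hVcont : ∀ i j, ContinuousOn (fun x => V x i j) (Icc a b)) :
    ∃ C : ℝ, 0 ≤ C ∧ ∀ x ∈ Icc a b, ∀ p : Fin n → ℂ,
      ‖((V x).map Complex.ofReal) *ᵥ p‖ ≤ C * ‖p‖ := by
  have hb : ∀ i j : Fin n, ∃ c : ℝ, ∀ x ∈ Icc a b, |V x i j| ≤ c := by
    intro i j
    obtain ⟨c, hc⟩ := isCompact_Icc.exists_bound_of_continuousOn (hVcont i j)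
    exact ⟨c, fun x hx => by simpa using hc x hx⟩
  choose c hc using hb
  obtain ⟨C0, hC0⟩ : ∃ C0 : ℝ, ∀ i j : Fin n, c i j ≤ C0 := by
    obtain ⟨C0, hC0⟩ := Finset.exists_le (α := ℝ)
      (Finset.univ.image fun ij : Fin n × Fin n => c ij.1 ij.2)
    exact ⟨C0, fun i j => hC0 _ (Finset.mem_image_of_mem _ (Finset.mem_univ (i,j)))⟩
  refine ⟨n * max C0 0, by positivity, fun x hx p => ?_⟩
  have hnn : (0:ℝ) ≤ n * max C0 0 * ‖p‖ := by positivity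
  rw [pi_norm_le_iff_of_nonneg hnn]
  intro i
  have hent : ∀ j, ‖(V x i j : ℂ)‖ ≤ max C0 0 := by
    intro j
    rw [Complex.norm_real, Real.norm_eq_abs]
    exact le_trans (hc i j x hx) (le_trans (hC0 i j) (le_max_left _ _))
  have : ((V x).map Complex.ofReal *ᵥ p) i = ∑ j, (V x i j : ℂ) * p j := by
    simp [Matrix.mulVec, dotProduct, Matrix.map_apply]
  rw [this]
  calc ‖∑ j, (V x i j : ℂ) * p j‖ ≤ ∑ j, ‖(V x i j : ℂ) * p j‖ := norm_sum_le _ _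
    _ ≤ ∑ _j : Fin n, max C0 0 * ‖p‖ := by
        apply Finset.sum_le_sum
        intro j _
        rw [norm_mul]
        exact mul_le_mul (hent j) (norm_le_pi_norm p j) (norm_nonneg _) (le_max_right _ _)
    _ = n * max C0 0 * ‖p‖ := by simp [Finset.sum_const, mul_assoc]

/-- Uniqueness for the second-order linear ODE with zero initial data. -/
lemma ode_unique {n : ℕ} {a b : ℝ} (hab : a < b) (V : ℝ → Matrix (Fin n) (Fin n) ℝ)
    {C : ℝ} (hC : ∀ x ∈ Icc a b, ∀ p : Fin n → ℂ, ‖((V x).map Complex.ofReal) *ᵥ p‖ ≤ C * ‖p‖)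
    (r : ℝ) (u u' u'' : ℝ → Fin n → ℂ)
    (h1 : ∀ x ∈ Icc a b, HasDerivWithinAt u (u' x) (Icc a b) x)
    (h2 : ∀ x ∈ Icc a b, HasDerivWithinAt u' (u'' x) (Icc a b) x)
    (h3 : ∀ x ∈ Icc a b, -u'' x + ((V x).map Complex.ofReal).mulVec (u x) = (r:ℂ) • u x)
    (ha : u a = 0) (ha' : u' a = 0) : ∀ x ∈ Icc a b, u x = 0 := by
  set Vc : ℝ → Matrix (Fin n) (Fin n) ℂ :=
    fun t => (V (max a (min t b))).map Complex.ofReal with hVcdef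
  have hclamp : ∀ t : ℝ, max a (min t b) ∈ Icc a b :=
    fun t => ⟨le_max_left _ _, max_le (le_of_lt hab) (min_le_right _ _)⟩
  have hVc : ∀ t ∈ Icc a b, Vc t = (V t).map Complex.ofReal := by
    intro t ht
    simp only [hVcdef, min_eq_left ht.2, max_eq_right ht.1]
  set vf : ℝ → (Fin n → ℂ) × (Fin n → ℂ) → (Fin n → ℂ) × (Fin n → ℂ) :=
    fun t y => (y.2, Vc t *ᵥ y.1 - (r:ℂ) • y.1) with hvf
  set K : NNReal := Real.toNNReal (max 1 (C + |r|)) with hK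
  have hK1 : (1:ℝ) ≤ K := by
    rw [hK, Real.coe_toNNReal _ (le_trans zero_le_one (le_max_left _ _))]
    exact le_max_left _ _
  have hKC : C + |r| ≤ (K:ℝ) := by
    rw [hK, Real.coe_toNNReal _ (le_trans zero_le_one (le_max_left _ _))]
    exact le_max_right _ _
  have hv : ∀ t, LipschitzWith K (vf t) := by
    intro t
    apply LipschitzWith.of_dist_le_mul
    intro y z
    rw [Prod.dist_eq]
    apply max_le
    · calc dist y.2 z.2 ≤ dist y z := by rw [Prod.dist_eq]; exact le_max_right _ _
        _ ≤ K * dist y z := le_mul_of_one_le_left dist_nonneg hK1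
    · have heq : Vc t *ᵥ y.1 - (r:ℂ) • y.1 - (Vc t *ᵥ z.1 - (r:ℂ) • z.1)
          = Vc t *ᵥ (y.1 - z.1) - (r:ℂ) • (y.1 - z.1) := by
        rw [Matrix.mulVec_sub, smul_sub]; abel
      rw [dist_eq_norm, heq]
      calc ‖Vc t *ᵥ (y.1 - z.1) - (r:ℂ) • (y.1 - z.1)‖
          ≤ ‖Vc t *ᵥ (y.1 - z.1)‖ + ‖(r:ℂ) • (y.1 - z.1)‖ := norm_sub_le _ _
        _ ≤ C * ‖y.1 - z.1‖ + |r| * ‖y.1 - z.1‖ := by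
            refine add_le_add (hC _ (hclamp t) _) ?_
            rw [norm_smul, Complex.norm_real, Real.norm_eq_abs]
        _ = (C + |r|) * dist y.1 z.1 := by rw [dist_eq_norm]; ring
        _ ≤ (K:ℝ) * dist y z := by
            refine mul_le_mul hKC ?_ dist_nonneg (le_trans zero_le_one hK1)
            rw [Prod.dist_eq]; exact le_max_left _ _
  set f : ℝ → (Fin n → ℂ) × (Fin n → ℂ) := fun t => (u t, u' t) with hf
  have hu'' : ∀ t ∈ Icc a b, u'' t = Vc t *ᵥ u t - (r:ℂ) • u t := by
    intro t ht
    have h := h3 t ht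
    rw [hVc t ht, eq_sub_iff_add_eq, ← h]
    abel
  have hfd : ∀ t ∈ Ico a b, HasDerivWithinAt f (vf t (f t)) (Ici t) t := by
    intro t ht
    have htI : t ∈ Icc a b := ⟨ht.1, le_of_lt ht.2⟩
    have := (h1 t htI).prodMk (h2 t htI)
    rw [hu'' t htI] at this
    exact hderIci' ht this
  have hgd : ∀ t ∈ Ico a b, HasDerivWithinAt
      (fun _ : ℝ => ((0 : Fin n → ℂ), (0 : Fin n → ℂ))) (vf t ((0,0))) (Ici t) t := by
    intro t _
    have : vf t ((0 : Fin n → ℂ), (0 : Fin n → ℂ)) = (0, 0) := by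
      simp [hvf]
    rw [this]
    exact hasDerivWithinAt_const _ _ _
  have hcf : ContinuousOn f (Icc a b) :=
    ContinuousOn.prodMk (fun x hx => (h1 x hx).continuousWithinAt)
      (fun x hx => (h2 x hx).continuousWithinAt)
  have hcg : ContinuousOn (fun _ : ℝ => ((0 : Fin n → ℂ), (0 : Fin n → ℂ))) (Icc a b) :=
    continuousOn_const
  have heq := ODE_solution_unique hv hcf hfd hcg hgd (by simp [hf, ha, ha'])
  intro x hx
  have h4 := congrArg Prod.fst (heq hx)
  simpa [hf] using h4

/-- Derivative of a (bilinear) dot product of two vector-valued functions. -/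
lemma dp_deriv {n : ℕ} {p q : ℝ → Fin n → ℂ} {p' q' : Fin n → ℂ} {s : Set ℝ} {x : ℝ}
    (hp : HasDerivWithinAt p p' s x) (hq : HasDerivWithinAt q q' s x) :
    HasDerivWithinAt (fun t => p t ⬝ᵥ q t) (p' ⬝ᵥ q x + p x ⬝ᵥ q') s x := by
  have h : ∀ i : Fin n, HasDerivWithinAt (fun t => p t i * q t i)
      (p' i * q x i + p x i * q' i) s x :=
    fun i => (hasDerivWithinAt_pi.mp hp i).mul (hasDerivWithinAt_pi.mp hq i)
  have := HasDerivWithinAt.fun_sum (fun i (_ : i ∈ Finset.univ) => h i)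
  simpa [dotProduct, Finset.sum_add_distrib] using this

lemma exp_sum_ne_one {θ₁ θ₂ : ℝ} (hθ₁ : θ₁ ∈ Ioo 0 Real.pi) (hθ₂ : θ₂ ∈ Ioo 0 Real.pi) :
    Complex.exp (θ₁ * Complex.I) * Complex.exp (θ₂ * Complex.I) ≠ 1 := by
  rw [← Complex.exp_add]
  intro h
  have h2 : (((θ₁ + θ₂ : ℝ)) : ℂ) * Complex.I = ↑θ₁ * Complex.I + ↑θ₂ * Complex.I := by
    push_cast; ring
  rw [← h2, Complex.exp_eq_one_iff] at h
  obtain ⟨k, hk⟩ := h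
  have hk2 : ((θ₁ + θ₂ : ℝ) : ℂ) = (k : ℂ) * (2 * Real.pi) := by
    have : ((θ₁ + θ₂ : ℝ) : ℂ) * Complex.I = ((k : ℂ) * (2 * Real.pi)) * Complex.I := by
      rw [hk]; ring
    exact mul_right_cancel₀ Complex.I_ne_zero this
  have hk3 : θ₁ + θ₂ = (k : ℝ) * (2 * Real.pi) := by exact_mod_cast hk2
  have hpos : (0:ℝ) < θ₁ + θ₂ := add_pos hθ₁.1 hθ₂.1
  have hlt : θ₁ + θ₂ < 2 * Real.pi := by linarith [hθ₁.2, hθ₂.2]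
  have h2pi : (0:ℝ) < 2 * Real.pi := by positivity
  have hk0 : (0:ℝ) < (k:ℝ) := by
    by_contra hc
    push_neg at hc
    nlinarith
  have hk1 : (k:ℝ) < 1 := by
    by_contra hc
    push_neg at hc
    nlinarith
  have hik0 : (0:ℤ) < k := by exact_mod_cast hk0
  have hik1 : k < 1 := by exact_mod_cast hk1
  omega

/-- The (non-conjugated) Wronskian of two eigenfunctions with `θ`-type boundary conditions,
`θ ∈ (0,π)`, vanishes at `a`. -/
lemma wronskian_vanish {n : ℕ} {a b : ℝ} (hab : a < b) {V : ℝ → Matrix (Fin n) (Fin n) ℝ}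
    (hVsymm : ∀ x ∈ Icc a b, (V x)ᵀ = V x) {r θ₁ θ₂ : ℝ}
    (hθ₁ : θ₁ ∈ Ioo 0 Real.pi) (hθ₂ : θ₂ ∈ Ioo 0 Real.pi)
    {u u' u'' v v' v'' : ℝ → Fin n → ℂ}
    (hu : IsEig n a b V r θ₁ u u' u'') (hv : IsEig n a b V r θ₂ v v' v'') :
    u' a ⬝ᵥ v a - u a ⬝ᵥ v' a = 0 := by
  obtain ⟨hu1, hu2, hu3, hub, hub'⟩ := hu
  obtain ⟨hv1, hv2, hv3, hvb, hvb'⟩ := hv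
  have hsym : ∀ x ∈ Icc a b, ∀ p q : Fin n → ℂ,
      (((V x).map Complex.ofReal) *ᵥ p) ⬝ᵥ q = p ⬝ᵥ (((V x).map Complex.ofReal) *ᵥ q) := by
    intro x hx p q
    have hM : ((V x).map Complex.ofReal)ᵀ = (V x).map Complex.ofReal := by
      rw [← Matrix.transpose_map, hVsymm x hx]
    calc (((V x).map Complex.ofReal) *ᵥ p) ⬝ᵥ q
        = q ⬝ᵥ (((V x).map Complex.ofReal) *ᵥ p) := dotProduct_comm _ _
      _ = (q ᵥ* ((V x).map Complex.ofReal)) ⬝ᵥ p := dotProduct_mulVec _ _ _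
      _ = (((V x).map Complex.ofReal)ᵀ *ᵥ q) ⬝ᵥ p := by rw [Matrix.mulVec_transpose]
      _ = (((V x).map Complex.ofReal) *ᵥ q) ⬝ᵥ p := by rw [hM]
      _ = p ⬝ᵥ (((V x).map Complex.ofReal) *ᵥ q) := dotProduct_comm _ _
  set w : ℝ → ℂ := fun x => u' x ⬝ᵥ v x - u x ⬝ᵥ v' x with hw
  have hu'' : ∀ x ∈ Icc a b, u'' x = ((V x).map Complex.ofReal) *ᵥ u x - (r:ℂ) • u x := by
    intro x hx
    have h := hu3 x hx
    rw [eq_sub_iff_add_eq, ← h]; abel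
  have hv'' : ∀ x ∈ Icc a b, v'' x = ((V x).map Complex.ofReal) *ᵥ v x - (r:ℂ) • v x := by
    intro x hx
    have h := hv3 x hx
    rw [eq_sub_iff_add_eq, ← h]; abel
  have hwd : ∀ x ∈ Icc a b, HasDerivWithinAt w 0 (Icc a b) x := by
    intro x hx
    have h1 := dp_deriv (hu2 x hx) (hv1 x hx)
    have h2 := dp_deriv (hu1 x hx) (hv2 x hx)
    have h3 := h1.sub h2
    have hval : u'' x ⬝ᵥ v x + u' x ⬝ᵥ v' x - (u' x ⬝ᵥ v' x + u x ⬝ᵥ v'' x) = 0 := by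
      rw [hu'' x hx, hv'' x hx, sub_dotProduct, dotProduct_sub,
        smul_dotProduct, dotProduct_smul, hsym x hx]
      simp only [smul_eq_mul, smul_dotProduct, dotProduct_smul]
      ring
    exact hval ▸ h3
  have hconst := constant_of_has_deriv_right_zero
    (f := w) (a := a) (b := b)
    (fun x hx => (hwd x hx).continuousWithinAt)
    (fun x hx => hderIci' hx (hwd x ⟨hx.1, hx.2.le⟩))
  have hwb := hconst b ⟨hab.le, le_refl b⟩
  have hwb2 : w b = Complex.exp (θ₁ * Complex.I) * Complex.exp (θ₂ * Complex.I) * w a := by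
    simp only [hw, hub, hvb, hub', hvb', smul_dotProduct, dotProduct_smul,
      smul_eq_mul]
    ring
  have hne := exp_sum_ne_one hθ₁ hθ₂
  have hwa : w a = 0 := by
    have h0 : (Complex.exp (θ₁ * Complex.I) * Complex.exp (θ₂ * Complex.I) - 1) * w a = 0 := by
      rw [sub_mul, one_mul, ← hwb2, hwb]
      ring
    rcases mul_eq_zero.mp h0 with h | h
    · exact absurd (sub_eq_zero.mp h) hne
    · exact h
  exact hwa

/-! ### The symplectic form on initial data -/

abbrev PP (n : ℕ) := (Fin n → ℂ) × (Fin n → ℂ)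

def symB (n : ℕ) : LinearMap.BilinForm ℂ (PP n) :=
  LinearMap.mk₂ ℂ (fun z w => z.2 ⬝ᵥ w.1 - z.1 ⬝ᵥ w.2)
    (fun z z' w => by simp [add_dotProduct]; ring)
    (fun c z w => by simp [smul_dotProduct, smul_eq_mul]; ring)
    (fun z w w' => by simp [dotProduct_add]; ring)
    (fun c z w => by simp [dotProduct_smul, smul_eq_mul]; ring)

lemma symB_apply (n : ℕ) (z w : PP n) : symB n z w = z.2 ⬝ᵥ w.1 - z.1 ⬝ᵥ w.2 := rfl

lemma symB_refl (n : ℕ) : (symB n).IsRefl := by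
  intro x y h
  rw [symB_apply] at h ⊢
  rw [sub_eq_zero] at h ⊢
  rw [dotProduct_comm y.2 x.1, dotProduct_comm y.1 x.2]
  exact h.symm

lemma symB_nondeg (n : ℕ) : (symB n).Nondegenerate := by
  refine (LinearMap.IsRefl.nondegenerate_iff_separatingLeft (symB_refl n)).mpr ?_
  intro z hz
  have h1 : ∀ i, z.2 i = 0 := by
    intro i
    have := hz (Pi.single i 1, 0)
    simpa [symB_apply, dotProduct_single] using this
  have h2 : ∀ i, z.1 i = 0 := by
    intro i
    have := hz (0, Pi.single i 1)
    simpa [symB_apply, dotProduct_single] using this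
  ext i
  exacts [h2 i, h1 i]

open Module in
lemma isotropic_bound (n : ℕ) (D : Set (PP n)) (hD : ∀ p ∈ D, ∀ q ∈ D, symB n p q = 0) :
    finrank ℂ (Submodule.span ℂ D) ≤ n := by
  set L := Submodule.span ℂ D with hL
  have hiso : ∀ p ∈ L, ∀ q ∈ L, symB n p q = 0 := by
    have step1 : ∀ q ∈ D, ∀ p ∈ L, symB n p q = 0 := by
      intro q hq
      have : L ≤ LinearMap.ker ((symB n).flip q) := by
        rw [hL, Submodule.span_le]
        intro p hp
        simpa using hD p hp q hq
      intro p hp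
      simpa using this hp
    intro p hp
    have : L ≤ LinearMap.ker (symB n p) := by
      rw [hL, Submodule.span_le]
      intro q hq
      simpa using step1 q hq p hp
    intro q hq
    simpa using this hq
  have hle : L ≤ (symB n).orthogonal L := fun x hx m hm => hiso m hm x hx
  have hkey := LinearMap.BilinForm.finrank_add_finrank_orthogonal (symB_refl n) L
  rw [LinearMap.BilinForm.orthogonal_top_eq_bot (symB_nondeg n), inf_bot_eq] at hkey
  rw [finrank_bot, add_zero] at hkey
  have hP : finrank ℂ (PP n) = 2 * n := by
    rw [Module.finrank_prod, Module.finrank_fintype_fun_eq_card]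
    simp [two_mul]
  have hmono : finrank ℂ L ≤ finrank ℂ ((symB n).orthogonal L) := Submodule.finrank_mono hle
  omega

/-- for every fixed `r`, the ℂ-subspace spanned by `⋃_{θ ∈ (0,π)} E(r,θ)`
has dimension at most `n`. -/
theorem span_union_eigenspaces_dim_le (n : ℕ) (hn : 1 ≤ n) (a b : ℝ) (hab : a < b)
    (V : ℝ → Matrix (Fin n) (Fin n) ℝ)
    (hVcont : ∀ i j, ContinuousOn (fun x => V x i j) (Icc a b))
    (hVsymm : ∀ x ∈ Icc a b, (V x)ᵀ = V x)
    (r : ℝ) :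
    Set.finrank ℂ (⋃ θ ∈ Ioo (0 : ℝ) Real.pi, Eset n a b V r θ) ≤ n := by
  classical
  obtain ⟨C, hC0, hC⟩ := mulVec_bound V hVcont
  -- triple space
  set Rst : ((ℝ → Fin n → ℂ) × (ℝ → Fin n → ℂ) × (ℝ → Fin n → ℂ)) →ₗ[ℂ]
      (Icc a b → Fin n → ℂ) :=
    { toFun := fun q => fun x => q.1 x
      map_add' := fun q p => rfl
      map_smul' := fun c q => rfl } with hRst
  set Dt : ((ℝ → Fin n → ℂ) × (ℝ → Fin n → ℂ) × (ℝ → Fin n → ℂ)) →ₗ[ℂ] PP n :=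
    { toFun := fun q => (q.1 a, q.2.1 a)
      map_add' := fun q p => rfl
      map_smul' := fun c q => rfl } with hDt
  set Sol : Submodule ℂ ((ℝ → Fin n → ℂ) × (ℝ → Fin n → ℂ) × (ℝ → Fin n → ℂ)) :=
    { carrier := {q | (∀ x ∈ Icc a b, HasDerivWithinAt q.1 (q.2.1 x) (Icc a b) x) ∧
        (∀ x ∈ Icc a b, HasDerivWithinAt q.2.1 (q.2.2 x) (Icc a b) x) ∧
        (∀ x ∈ Icc a b,
          -q.2.2 x + ((V x).map Complex.ofReal).mulVec (q.1 x) = (r:ℂ) • q.1 x)}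
      add_mem' := by
        rintro q p ⟨hq1, hq2, hq3⟩ ⟨hp1, hp2, hp3⟩
        refine ⟨fun x hx => (hq1 x hx).add (hp1 x hx),
          fun x hx => (hq2 x hx).add (hp2 x hx), fun x hx => ?_⟩
        simp only [Prod.fst_add, Prod.snd_add, Pi.add_apply, Matrix.mulVec_add, smul_add]
        rw [← hq3 x hx, ← hp3 x hx]
        abel
      zero_mem' := by
        refine ⟨fun x hx => ?_, fun x hx => ?_, fun x hx => ?_⟩
        · exact hasDerivWithinAt_const x (Icc a b) (0 : Fin n → ℂ)
        · exact hasDerivWithinAt_const x (Icc a b) (0 : Fin n → ℂ)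
        · simp
      smul_mem' := by
        rintro c q ⟨hq1, hq2, hq3⟩
        refine ⟨fun x hx => (hq1 x hx).const_smul c,
          fun x hx => (hq2 x hx).const_smul c, fun x hx => ?_⟩
        show -(c • q.2.2) x + _ *ᵥ (c • q.1) x = (r:ℂ) • (c • q.1) x
        simp only [Pi.smul_apply, Matrix.mulVec_smul]
        rw [← smul_neg, ← smul_add, hq3 x hx, smul_comm]} with hSol
  set D : Set (PP n) := {p | ∃ θ ∈ Ioo (0:ℝ) Real.pi, ∃ u u' u'',
      IsEig n a b V r θ u u' u'' ∧ p = (u a, u' a)} with hD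
  set L := Submodule.span ℂ D with hL
  set S := Sol ⊓ Submodule.comap Dt L with hS
  set f := Dt.comp S.subtype with hf
  set g := Rst.comp S.subtype with hg
  have hker : LinearMap.ker f ≤ LinearMap.ker g := by
    rintro ⟨q, hqS⟩ hq
    rw [LinearMap.mem_ker] at hq ⊢
    have hq0 : Dt q = 0 := hq
    have ha1 : q.1 a = 0 := congrArg Prod.fst hq0
    have ha2 : q.2.1 a = 0 := congrArg Prod.snd hq0
    obtain ⟨hq1, hq2, hq3⟩ := hqS.1
    have huniq := ode_unique hab V hC r q.1 q.2.1 q.2.2 hq1 hq2 hq3 ha1 ha2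
    show Rst q = 0
    funext x
    exact huniq x x.2
  obtain ⟨hfin, hrank⟩ := rank_chase f g hker
  have hUle : Submodule.span ℂ (⋃ θ ∈ Ioo (0:ℝ) Real.pi, Eset n a b V r θ) ≤
      LinearMap.range g := by
    rw [Submodule.span_le]
    intro φ hφ
    simp only [mem_iUnion] at hφ
    obtain ⟨θ, hθ, u, u', u'', heig, hres⟩ := hφ
    have hqS : ((u, u', u'') : (ℝ → Fin n → ℂ) × (ℝ → Fin n → ℂ) × (ℝ → Fin n → ℂ)) ∈ S := by
      constructor
      · exact ⟨heig.1, heig.2.1, heig.2.2.1⟩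
      · exact Submodule.subset_span ⟨θ, hθ, u, u', u'', heig, rfl⟩
    refine ⟨⟨_, hqS⟩, ?_⟩
    funext x
    exact (hres x).symm
  have hrangef : LinearMap.range f ≤ L := by
    rintro p ⟨⟨q, hqS⟩, rfl⟩
    exact hqS.2
  have hfL : Module.finrank ℂ (LinearMap.range f) ≤ Module.finrank ℂ L :=
    Submodule.finrank_mono hrangef
  have hiso : ∀ p ∈ D, ∀ q ∈ D, symB n p q = 0 := by
    rintro p ⟨θ₁, hθ₁, u, u', u'', hu, rfl⟩ q ⟨θ₂, hθ₂, v, v', v'', hv, rfl⟩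
    rw [symB_apply]
    exact wronskian_vanish hab hVsymm hθ₁ hθ₂ hu hv
  have hLn : Module.finrank ℂ L ≤ n := isotropic_bound n D hiso
  calc Set.finrank ℂ (⋃ θ ∈ Ioo (0:ℝ) Real.pi, Eset n a b V r θ)
      = Module.finrank ℂ
        (Submodule.span ℂ (⋃ θ ∈ Ioo (0:ℝ) Real.pi, Eset n a b V r θ)) := rfl
    _ ≤ Module.finrank ℂ (LinearMap.range g) := Submodule.finrank_mono hUle
    _ ≤ Module.finrank ℂ (LinearMap.range f) := hrank
    _ ≤ Module.finrank ℂ L := hfL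
    _ ≤ n := hLn
end
end

section
/- Let (λ, u) be a C¹ eigenvalue branch on (θ₁,θ₂). Then for every θ ∈ (θ₁,θ₂), λ'(θ) · ∫_a^b ‖u(θ,x)‖²_{ℂ^n} dx = 2·Im⟨∂ₓu(θ,a), u(θ,a)⟩. In particular, if ∫_a^b ‖u(θ,x)‖² dx = 1 then λ'(θ) = 2·Im⟨∂ₓu(θ,a), u(θ,a)⟩. -/
open Set Matrix

noncomputable section

/-- The inner product `⟨v,w⟩ = Σ_j v_j conj(w_j)` on `ℂ^n`. -/
def cinner (n : ℕ) (v w : Fin n → ℂ) : ℂ := ∑ j, v j * (starRingEnd ℂ) (w j)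

/-- `(lam, u)` (with the indicated partial derivatives) is a C¹ eigenvalue branch on
`(θ₁,θ₂)`: `lam` is differentiable with derivative `lam'`, for each `θ` the function
`u(θ,·)` is a `(lam(θ),θ)`-eigenfunction with `∂ₓu = ux`, `∂ₓ∂ₓu = uxx`, the maps `u`
and `ux` are differentiable in `θ` with derivatives `uθ`, `uθx`, and `uθ`, `uθx` are
jointly continuous on `(θ₁,θ₂) × [a,b]`. -/
def IsBranch (n : ℕ) (a b : ℝ) (V : ℝ → Matrix (Fin n) (Fin n) ℝ) (θ₁ θ₂ : ℝ)
    (lam lam' : ℝ → ℝ) (u ux uxx uθ uθx : ℝ → ℝ → Fin n → ℂ) : Prop :=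
  (∀ θ ∈ Ioo θ₁ θ₂, HasDerivWithinAt lam (lam' θ) (Ioo θ₁ θ₂) θ) ∧
  (∀ θ ∈ Ioo θ₁ θ₂, IsEig n a b V (lam θ) θ (u θ) (ux θ) (uxx θ)) ∧
  (∀ θ ∈ Ioo θ₁ θ₂, ∀ x ∈ Icc a b,
      HasDerivWithinAt (fun t => u t x) (uθ θ x) (Ioo θ₁ θ₂) θ) ∧
  (∀ θ ∈ Ioo θ₁ θ₂, ∀ x ∈ Icc a b,
      HasDerivWithinAt (fun t => ux t x) (uθx θ x) (Ioo θ₁ θ₂) θ) ∧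
  ContinuousOn (fun p : ℝ × ℝ => uθ p.1 p.2) (Ioo θ₁ θ₂ ×ˢ Icc a b) ∧
  ContinuousOn (fun p : ℝ × ℝ => uθx p.1 p.2) (Ioo θ₁ θ₂ ×ˢ Icc a b)

lemma cinner_hasDerivWithinAt {n : ℕ} {f g : ℝ → Fin n → ℂ} {f' g' : Fin n → ℂ}
    {s : Set ℝ} {x : ℝ} (hf : HasDerivWithinAt f f' s x) (hg : HasDerivWithinAt g g' s x) :
    HasDerivWithinAt (fun y => cinner n (f y) (g y))
      (cinner n f' (g x) + cinner n (f x) g') s x := by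
  have h : HasDerivWithinAt (fun y => ∑ j, f y j * (starRingEnd ℂ) (g y j))
      (∑ j, (f' j * (starRingEnd ℂ) (g x j) + f x j * (starRingEnd ℂ) (g' j))) s x := by
    refine HasDerivWithinAt.fun_sum fun j _ => ?_
    have h1 := hasDerivWithinAt_pi.mp hf j
    have h2 := (hasDerivWithinAt_pi.mp hg j).star
    have h3 := h1.fun_mul h2
    simp only [starRingEnd_apply] at h3 ⊢
    exact h3
  have he : (fun y => cinner n (f y) (g y)) = fun y => ∑ j, f y j * (starRingEnd ℂ) (g y j) := rfl
  rw [he, cinner, cinner, ← Finset.sum_add_distrib]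
  exact h

lemma cinner_sub_left {n : ℕ} (v w t : Fin n → ℂ) :
    cinner n (v - w) t = cinner n v t - cinner n w t := by
  simp [cinner, sub_mul, Finset.sum_sub_distrib]

lemma cinner_sub_right {n : ℕ} (v w t : Fin n → ℂ) :
    cinner n v (w - t) = cinner n v w - cinner n v t := by
  simp [cinner, mul_sub, Finset.sum_sub_distrib]

lemma cinner_smul_left {n : ℕ} (c : ℂ) (v w : Fin n → ℂ) :
    cinner n (c • v) w = c * cinner n v w := by
  simp [cinner, Finset.mul_sum, mul_assoc]

lemma cinner_smul_right {n : ℕ} (c : ℂ) (v w : Fin n → ℂ) :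
    cinner n v (c • w) = (starRingEnd ℂ) c * cinner n v w := by
  simp only [cinner, Pi.smul_apply, smul_eq_mul, _root_.map_mul, Finset.mul_sum]
  exact Finset.sum_congr rfl fun j _ => by ring

lemma cinner_symm_mulVec {n : ℕ} (M : Matrix (Fin n) (Fin n) ℝ) (hM : Mᵀ = M)
    (v w : Fin n → ℂ) :
    cinner n ((M.map Complex.ofReal).mulVec v) w
      = cinner n v ((M.map Complex.ofReal).mulVec w) := by
  simp only [cinner, Matrix.mulVec, dotProduct, Matrix.map_apply, map_sum, _root_.map_mul,
    Complex.conj_ofReal, Finset.sum_mul, Finset.mul_sum]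
  rw [Finset.sum_comm]
  refine Finset.sum_congr rfl fun j _ => Finset.sum_congr rfl fun k _ => ?_
  have hjk : M j k = M k j := by conv_lhs => rw [← hM]; rw [Matrix.transpose_apply]
  rw [hjk]; ring

/-- along a C¹ eigenvalue branch,
`λ'(θ) ∫_a^b ‖u(θ,x)‖² dx = 2 Im ⟨∂ₓu(θ,a), u(θ,a)⟩`; in particular if
`∫_a^b ‖u(θ,x)‖² dx = 1` then `λ'(θ) = 2 Im ⟨∂ₓu(θ,a), u(θ,a)⟩`. -/
theorem eigenvalue_derivative_formula (n : ℕ) (hn : 1 ≤ n) (a b : ℝ) (hab : a < b)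
    (V : ℝ → Matrix (Fin n) (Fin n) ℝ)
    (hVcont : ∀ i j, ContinuousOn (fun x => V x i j) (Icc a b))
    (hVsymm : ∀ x ∈ Icc a b, (V x)ᵀ = V x)
    (θ₁ θ₂ : ℝ) (hθ₁ : 0 ≤ θ₁) (h12 : θ₁ < θ₂) (hθ₂ : θ₂ < 2 * Real.pi)
    (lam lam' : ℝ → ℝ) (u ux uxx uθ uθx : ℝ → ℝ → Fin n → ℂ)
    (hbranch : IsBranch n a b V θ₁ θ₂ lam lam' u ux uxx uθ uθx) :
    ∀ θ ∈ Ioo θ₁ θ₂,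
      lam' θ * (∫ x in a..b, ∑ j, Complex.normSq (u θ x j)) =
        2 * (cinner n (ux θ a) (u θ a)).im ∧
      ((∫ x in a..b, ∑ j, Complex.normSq (u θ x j)) = 1 →
        lam' θ = 2 * (cinner n (ux θ a) (u θ a)).im) := by
  obtain ⟨hlam, heig, huθ, huθx, hcθ, hcθx⟩ := hbranch
  intro θ hθ
  have haI : a ∈ Icc a b := ⟨le_refl a, hab.le⟩
  -- continuity of the integrand
  have hicont : ∀ φ ∈ Ioo θ₁ θ₂, ContinuousOn (fun x => cinner n (u θ x) (u φ x)) (Icc a b) := by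
    intro φ hφ x hx
    exact (cinner_hasDerivWithinAt ((heig θ hθ).1 x hx) ((heig φ hφ).1 x hx)).continuousWithinAt
  have hiint : ∀ φ ∈ Ioo θ₁ θ₂,
      IntervalIntegrable (fun x => cinner n (u θ x) (u φ x)) MeasureTheory.volume a b := by
    intro φ hφ
    have h := hicont φ hφ
    rw [← uIcc_of_le hab.le] at h
    exact h.intervalIntegrable
  set g : ℝ → ℂ := fun φ => ∫ x in a..b, cinner n (u θ x) (u φ x) with hgdef
  set Wa : ℝ → ℂ := fun φ => cinner n (ux θ a) (u φ a) - cinner n (u θ a) (ux φ a) with hWadef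
  -- key identity
  have key : ∀ φ ∈ Ioo θ₁ θ₂,
      ((lam φ - lam θ : ℝ) : ℂ) * g φ =
      (Complex.exp (((θ : ℂ) - (φ : ℂ)) * Complex.I) - 1) * Wa φ := by
    intro φ hφ
    obtain ⟨hu1, hu2, hueq, hub, hub'⟩ := heig θ hθ
    obtain ⟨hv1, hv2, hveq, hvb, hvb'⟩ := heig φ hφ
    set W : ℝ → ℂ := fun x => cinner n (ux θ x) (u φ x) - cinner n (u θ x) (ux φ x) with hWdef
    have hW : ∀ x ∈ Icc a b, HasDerivWithinAt W
        (((lam φ - lam θ : ℝ) : ℂ) * cinner n (u θ x) (u φ x)) (Icc a b) x := by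
      intro x hx
      have d1 := cinner_hasDerivWithinAt (hu2 x hx) (hv1 x hx)
      have d2 := cinner_hasDerivWithinAt (hu1 x hx) (hv2 x hx)
      have d := d1.sub d2
      refine d.congr_deriv ?_
      have e1 : uxx θ x = ((V x).map Complex.ofReal).mulVec (u θ x) - (lam θ : ℂ) • u θ x := by
        rw [← hueq x hx]; abel
      have e2 : uxx φ x = ((V x).map Complex.ofReal).mulVec (u φ x) - (lam φ : ℂ) • u φ x := by
        rw [← hveq x hx]; abel
      rw [e1, e2, cinner_sub_left, cinner_sub_right, cinner_smul_left, cinner_smul_right,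
        cinner_symm_mulVec (V x) (hVsymm x hx), Complex.conj_ofReal]
      push_cast
      ring
    have hcontW : ContinuousOn W (Icc a b) := fun x hx => (hW x hx).continuousWithinAt
    have hderiv : ∀ x ∈ Ioo a b, HasDerivWithinAt W
        (((lam φ - lam θ : ℝ) : ℂ) * cinner n (u θ x) (u φ x)) (Ioi x) x := fun x hx =>
      (((hW x (Ioo_subset_Icc_self hx)).hasDerivAt (Icc_mem_nhds hx.1 hx.2)).hasDerivWithinAt)
    have hint : IntervalIntegrable (fun x => ((lam φ - lam θ : ℝ) : ℂ) *
        cinner n (u θ x) (u φ x)) MeasureTheory.volume a b := (hiint φ hφ).const_mul _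
    have hftc := intervalIntegral.integral_eq_sub_of_hasDeriv_right_of_le hab.le hcontW hderiv hint
    rw [intervalIntegral.integral_const_mul] at hftc
    have hWb : W b = Complex.exp (((θ : ℂ) - (φ : ℂ)) * Complex.I) * W a := by
      have hconjexp : (starRingEnd ℂ) (Complex.exp ((φ : ℂ) * Complex.I))
          = Complex.exp (-((φ : ℂ) * Complex.I)) := by
        rw [← Complex.exp_conj]
        congr 1
        simp [Complex.conj_ofReal]
      have hmul : Complex.exp ((θ : ℂ) * Complex.I) * Complex.exp (-((φ : ℂ) * Complex.I))
          = Complex.exp (((θ : ℂ) - (φ : ℂ)) * Complex.I) := by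
        rw [← Complex.exp_add]; ring_nf
      simp only [hWdef, hub, hub', hvb, hvb', cinner_smul_left, cinner_smul_right, hconjexp]
      rw [← hmul]; ring
    rw [hWb] at hftc
    have hWa : Wa φ = W a := rfl
    rw [hgdef]
    simp only
    rw [hftc, hWa]; ring
  -- neighbourhood setup
  obtain ⟨hθl, hθr⟩ := hθ
  have hθ' : θ ∈ Ioo θ₁ θ₂ := ⟨hθl, hθr⟩
  set δ : ℝ := min (θ - θ₁) (θ₂ - θ) / 2 with hδdef
  have hδpos : 0 < δ := by
    apply div_pos _ two_pos
    apply lt_min <;> linarith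
  have hδ1 : δ < θ - θ₁ := by
    have := min_le_left (θ - θ₁) (θ₂ - θ); rw [hδdef]; linarith
  have hδ2 : δ < θ₂ - θ := by
    have := min_le_right (θ - θ₁) (θ₂ - θ); rw [hδdef]; linarith
  have hKsub : Icc (θ - δ) (θ + δ) ⊆ Ioo θ₁ θ₂ := by
    intro t ht
    exact ⟨by linarith [ht.1], by linarith [ht.2]⟩
  have hθK : θ ∈ Icc (θ - δ) (θ + δ) := ⟨by linarith, by linarith⟩
  -- bounds
  obtain ⟨M, hM⟩ := (isCompact_Icc.prod isCompact_Icc).exists_bound_of_continuousOn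
    (hcθ.mono (Set.prod_mono hKsub (subset_refl _)))
  obtain ⟨C₀, hC₀⟩ := isCompact_Icc.exists_bound_of_continuousOn
    (fun x hx => ((heig θ hθ').1 x hx).continuousWithinAt)
  have hC₀0 : 0 ≤ C₀ := le_trans (norm_nonneg _) (hC₀ a haI)
  have hM0 : 0 ≤ M := le_trans (norm_nonneg _) (hM (θ, a) ⟨hθK, haI⟩)
  have hdiff : ∀ φ ∈ Icc (θ - δ) (θ + δ), ∀ x ∈ Icc a b,
      ‖u φ x - u θ x‖ ≤ M * |φ - θ| := by
    intro φ hφ x hx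
    have := (convex_Icc (θ - δ) (θ + δ)).norm_image_sub_le_of_norm_hasDerivWithin_le
      (f := fun t => u t x) (f' := fun t => uθ t x)
      (fun t ht => (huθ t (hKsub ht) x hx).mono hKsub)
      (fun t ht => hM (t, x) ⟨ht, hx⟩) hθK hφ
    simpa [Real.norm_eq_abs] using this
  have hgbound : ∀ φ ∈ Icc (θ - δ) (θ + δ),
      ‖g φ - g θ‖ ≤ (n * C₀ * (M * (b - a))) * |φ - θ| := by
    intro φ hφ
    have hφI := hKsub hφ
    have hsub : g φ - g θ = ∫ x in a..b,
        (cinner n (u θ x) (u φ x) - cinner n (u θ x) (u θ x)) := by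
      rw [hgdef]; simp only
      rw [intervalIntegral.integral_sub (hiint φ hφI) (hiint θ hθ')]
    rw [hsub]
    have hpt : ∀ x ∈ Set.uIoc a b,
        ‖cinner n (u θ x) (u φ x) - cinner n (u θ x) (u θ x)‖ ≤ n * (C₀ * (M * |φ - θ|)) := by
      intro x hx
      have hxI : x ∈ Icc a b := by
        rw [Set.uIoc_of_le hab.le] at hx; exact ⟨hx.1.le, hx.2⟩
      have h1 : ∀ j, ‖u θ x j‖ ≤ C₀ := fun j => le_trans (norm_le_pi_norm _ j) (hC₀ x hxI)
      have h2 : ∀ j, ‖u φ x j - u θ x j‖ ≤ M * |φ - θ| := by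
        intro j
        have h := norm_le_pi_norm (u φ x - u θ x) j
        simp only [Pi.sub_apply] at h
        exact le_trans h (hdiff φ hφ x hxI)
      calc ‖cinner n (u θ x) (u φ x) - cinner n (u θ x) (u θ x)‖
          = ‖∑ j, u θ x j * (starRingEnd ℂ) (u φ x j - u θ x j)‖ := by
            simp only [cinner, map_sub, mul_sub, Finset.sum_sub_distrib]
        _ ≤ ∑ j, ‖u θ x j * (starRingEnd ℂ) (u φ x j - u θ x j)‖ := norm_sum_le _ _
        _ ≤ ∑ _j : Fin n, C₀ * (M * |φ - θ|) := by
            refine Finset.sum_le_sum fun j _ => ?_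
            rw [norm_mul]
            have hns : ‖(starRingEnd ℂ) (u φ x j - u θ x j)‖ = ‖u φ x j - u θ x j‖ :=
              RCLike.norm_conj _
            rw [hns]
            exact mul_le_mul (h1 j) (h2 j) (norm_nonneg _) hC₀0
        _ = n * (C₀ * (M * |φ - θ|)) := by
            simp [Finset.sum_const, Finset.card_univ]
    have hb := intervalIntegral.norm_integral_le_of_norm_le_const hpt
    calc ‖∫ x in a..b, (cinner n (u θ x) (u φ x) - cinner n (u θ x) (u θ x))‖
        ≤ (n * (C₀ * (M * |φ - θ|))) * |b - a| := hb
      _ = (n * C₀ * (M * (b - a))) * |φ - θ| := by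
          rw [abs_of_pos (by linarith : (0:ℝ) < b - a)]; ring
  have hKmem : Icc (θ - δ) (θ + δ) ∈ nhds θ := Icc_mem_nhds (by linarith) (by linarith)
  have hL : nhdsWithin θ (Ioo θ₁ θ₂ \ {θ}) = nhdsWithin θ {θ}ᶜ := by
    rw [diff_eq, Set.inter_comm, nhdsWithin_inter, nhdsWithin_eq_nhds.2 (isOpen_Ioo.mem_nhds hθ')]
    exact inf_eq_left.2 nhdsWithin_le_nhds
  haveI hNB : (nhdsWithin θ (Ioo θ₁ θ₂ \ {θ})).NeBot := by
    rw [hL]; exact inferInstance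
  set F : ℝ → ℂ := fun φ => Complex.exp (((θ : ℂ) - (φ : ℂ)) * Complex.I) with hFdef
  -- limits
  have t1 : Filter.Tendsto (fun φ => ((slope lam θ φ : ℝ) : ℂ))
      (nhdsWithin θ (Ioo θ₁ θ₂ \ {θ})) (nhds ((lam' θ : ℝ) : ℂ)) :=
    (Complex.continuous_ofReal.tendsto _).comp
      (hasDerivWithinAt_iff_tendsto_slope.mp (hlam θ hθ'))
  have t2 : Filter.Tendsto g (nhdsWithin θ (Ioo θ₁ θ₂ \ {θ})) (nhds (g θ)) := by
    rw [← tendsto_sub_nhds_zero_iff]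
    have hbd : ∀ᶠ φ in nhdsWithin θ (Ioo θ₁ θ₂ \ {θ}),
        ‖g φ - g θ‖ ≤ (fun φ => ((n : ℝ) * C₀ * (M * (b - a))) * |φ - θ|) φ := by
      filter_upwards [nhdsWithin_le_nhds hKmem] with φ hφ
      exact hgbound φ hφ
    have habs : Filter.Tendsto (fun φ : ℝ => |φ - θ|) (nhds θ) (nhds 0) := by
      have hc : Continuous (fun φ : ℝ => |φ - θ|) :=
        continuous_abs.comp ((continuous_id (X := ℝ)).sub continuous_const)
      have := hc.tendsto θ
      simpa using this
    have htd : Filter.Tendsto (fun φ : ℝ => ((n : ℝ) * C₀ * (M * (b - a))) * |φ - θ|)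
        (nhdsWithin θ (Ioo θ₁ θ₂ \ {θ})) (nhds 0) := by
      have := habs.const_mul ((n : ℝ) * C₀ * (M * (b - a)))
      simpa using this.mono_left nhdsWithin_le_nhds
    exact squeeze_zero_norm' hbd htd
  have hF : HasDerivAt F (-Complex.I) θ := by
    have h1 : HasDerivAt (fun φ : ℝ => (φ : ℂ)) 1 θ := by
      have h := Complex.ofRealCLM.hasDerivAt (x := θ)
      simp at h
      exact h
    have h2 := (h1.const_sub ((θ : ℂ))).mul_const Complex.I
    have h3 := h2.cexp
    simpa using h3
  have t3 : Filter.Tendsto (slope F θ) (nhdsWithin θ (Ioo θ₁ θ₂ \ {θ})) (nhds (-Complex.I)) := by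
    rw [hasDerivAt_iff_tendsto_slope] at hF
    exact hF.mono_left (le_of_eq hL)
  have t4 : Filter.Tendsto Wa (nhdsWithin θ (Ioo θ₁ θ₂ \ {θ})) (nhds (Wa θ)) := by
    have c1 : ContinuousWithinAt Wa (Ioo θ₁ θ₂) θ := by
      apply ContinuousWithinAt.sub
      · exact (cinner_hasDerivWithinAt (hasDerivWithinAt_const θ _ (ux θ a))
          (huθ θ hθ' a haI)).continuousWithinAt
      · exact (cinner_hasDerivWithinAt (hasDerivWithinAt_const θ _ (u θ a))
          (huθx θ hθ' a haI)).continuousWithinAt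
    exact c1.mono_left (nhdsWithin_mono θ diff_subset)
  have heq : (fun φ => ((slope lam θ φ : ℝ) : ℂ) * g φ)
      =ᶠ[nhdsWithin θ (Ioo θ₁ θ₂ \ {θ})] (fun φ => slope F θ φ * Wa φ) := by
    filter_upwards [self_mem_nhdsWithin] with φ hφ
    obtain ⟨hφI, hφne⟩ := hφ
    have hk := key φ hφI
    have hne : (φ - θ : ℝ) ≠ 0 := sub_ne_zero.2 (by simpa using hφne)
    have hcne : ((φ : ℂ) - (θ : ℂ)) ≠ 0 := by
      simpa [Complex.ofReal_sub] using (Complex.ofReal_ne_zero.2 hne)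
    have hs1 : slope lam θ φ = (lam φ - lam θ) / (φ - θ) := slope_def_field lam θ φ
    have hs2 : slope F θ φ = (φ - θ)⁻¹ • (F φ - F θ) := slope_def_module F θ φ
    have hFθ : F θ = 1 := by
      rw [hFdef]; simp
    push_cast at hk
    rw [hs1, hs2, hFθ, Complex.real_smul, hFdef]
    simp only
    push_cast
    linear_combination (((φ : ℂ) - (θ : ℂ)))⁻¹ * hk
  have huniq : ((lam' θ : ℝ) : ℂ) * g θ = (-Complex.I) * Wa θ :=
    tendsto_nhds_unique (t1.mul t2) ((t3.mul t4).congr' heq.symm)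
  -- final computation
  have hgθ : g θ = ((∫ x in a..b, ∑ j, Complex.normSq (u θ x j) : ℝ) : ℂ) := by
    rw [hgdef]; simp only
    have hpt : ∀ x, cinner n (u θ x) (u θ x) = ((∑ j, Complex.normSq (u θ x j) : ℝ) : ℂ) := by
      intro x
      simp [cinner, Complex.mul_conj, Complex.ofReal_sum]
    simp only [hpt]
    exact intervalIntegral.integral_ofReal
  have hWaθ : Wa θ = cinner n (ux θ a) (u θ a)
      - (starRingEnd ℂ) (cinner n (ux θ a) (u θ a)) := by
    have hcj : cinner n (u θ a) (ux θ a) = (starRingEnd ℂ) (cinner n (ux θ a) (u θ a)) := by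
      simp only [cinner, map_sum, _root_.map_mul, Complex.conj_conj]
      exact Finset.sum_congr rfl fun j _ => by ring
    rw [hWadef]; simp only
    rw [hcj]
  rw [hgθ, hWaθ, Complex.sub_conj] at huniq
  set z := cinner n (ux θ a) (u θ a) with hzdef
  have h2 : (-Complex.I) * (((2 * z.im : ℝ) : ℂ) * Complex.I) = ((2 * z.im : ℝ) : ℂ) := by
    linear_combination (-((2 * z.im : ℝ) : ℂ)) * Complex.I_mul_I
  rw [h2, ← Complex.ofReal_mul] at huniq
  have hfinal : lam' θ * (∫ x in a..b, ∑ j, Complex.normSq (u θ x j)) = 2 * z.im :=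
    Complex.ofReal_injective huniq
  exact ⟨hfinal, fun h1 => by rw [h1, mul_one] at hfinal; exact hfinal⟩
end
end

section
/- Let n = 1, so V : [a,b] → ℝ is a continuous scalar potential. Let λ ∈ ℝ, let θ ∈ (0,π) ∪ (π,2π), and let u be a (λ,θ)-eigenfunction that is not identically zero. Then Im(u'(a)·conj(u(a))) ≠ 0. -/
open Set

noncomputable section

/-- Uniqueness for the first-order system `f' t = ((f t).2, W t • (f t).1)` on `[a,b]`. -/
lemma ode_unique_aux (a b : ℝ) (hab : a < b) (W : ℝ → ℝ) (C : ℝ)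
    (hC : ∀ t, |W t| ≤ C) (f g : ℝ → ℂ × ℂ)
    (hf : ∀ t ∈ Icc a b, HasDerivWithinAt f ((f t).2, (W t : ℂ) • (f t).1) (Icc a b) t)
    (hg : ∀ t ∈ Icc a b, HasDerivWithinAt g ((g t).2, (W t : ℂ) • (g t).1) (Icc a b) t)
    (hfg : f a = g a) : EqOn f g (Icc a b) := by
  have hC0 : (0 : ℝ) ≤ C := le_trans (abs_nonneg _) (hC 0)
  set K : NNReal := (max 1 C).toNNReal with hK
  set v : ℝ → ℂ × ℂ → ℂ × ℂ := fun t p => (p.2, (W t : ℂ) • p.1) with hv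
  have hlip : ∀ t, LipschitzWith K (v t) := by
    intro t
    have h1 : LipschitzWith 1 (Prod.snd : ℂ × ℂ → ℂ) := LipschitzWith.prod_snd
    have h2 : LipschitzWith (‖((W t : ℂ))‖₊ * 1)
        (fun p : ℂ × ℂ => (W t : ℂ) • p.1) :=
      (lipschitzWith_smul ((W t : ℂ))).comp LipschitzWith.prod_fst
    have h3 := h1.prodMk h2
    refine h3.weaken ?_
    have hWC : ‖((W t : ℂ))‖ ≤ C := by
      rw [Complex.norm_real, Real.norm_eq_abs]; exact hC t
    rw [← NNReal.coe_le_coe]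
    push_cast [hK, Real.coe_toNNReal _ (le_trans zero_le_one (le_max_left 1 C))]
    refine max_le (le_max_left 1 C) ?_
    calc (‖((W t : ℂ))‖ * 1 : ℝ) = ‖((W t : ℂ))‖ := mul_one _
      _ ≤ C := hWC
      _ ≤ max 1 C := le_max_right 1 C
  have hfc : ContinuousOn f (Icc a b) := fun t ht => (hf t ht).continuousWithinAt
  have hgc : ContinuousOn g (Icc a b) := fun t ht => (hg t ht).continuousWithinAt
  have hf' : ∀ t ∈ Ico a b, HasDerivWithinAt f (v t (f t)) (Ici t) t := fun t ht =>
    (hf t ⟨ht.1, ht.2.le⟩).mono_of_mem_nhdsWithin (Icc_mem_nhdsGE_of_mem ⟨ht.1, ht.2⟩)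
  have hg' : ∀ t ∈ Ico a b, HasDerivWithinAt g (v t (g t)) (Ici t) t := fun t ht =>
    (hg t ⟨ht.1, ht.2.le⟩).mono_of_mem_nhdsWithin (Icc_mem_nhdsGE_of_mem ⟨ht.1, ht.2⟩)
  exact ODE_solution_unique hlip hfc hf' hgc hg' hfg

/-- `u` (with derivatives `u'`, `u''` on `[a,b]`) is a scalar `(λ,θ)`-eigenfunction:
`-u'' + Vu = λu` on `[a,b]` with `θ`-periodic boundary conditions. -/
def IsEig1 (a b : ℝ) (V : ℝ → ℝ) (lam θ : ℝ) (u u' u'' : ℝ → ℂ) : Prop :=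
  (∀ x ∈ Icc a b, HasDerivWithinAt u (u' x) (Icc a b) x) ∧
  (∀ x ∈ Icc a b, HasDerivWithinAt u' (u'' x) (Icc a b) x) ∧
  (∀ x ∈ Icc a b, -u'' x + (V x : ℂ) * u x = (lam : ℂ) * u x) ∧
  u b = Complex.exp (θ * Complex.I) * u a ∧
  u' b = Complex.exp (θ * Complex.I) * u' a

/-- for a continuous scalar potential (`n = 1`), if `θ ∈ (0,π) ∪ (π,2π)`
and `u` is a `(λ,θ)`-eigenfunction that is not identically zero, then
`Im (u'(a) conj(u(a))) ≠ 0`. -/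
theorem im_wronskian_ne_zero (a b : ℝ) (hab : a < b)
    (V : ℝ → ℝ) (hVcont : ContinuousOn V (Icc a b))
    (lam θ : ℝ) (hθ : θ ∈ Ioo (0 : ℝ) Real.pi ∪ Ioo Real.pi (2 * Real.pi))
    (u u' u'' : ℝ → ℂ) (hu : IsEig1 a b V lam θ u u' u'')
    (hne : ∃ x ∈ Icc a b, u x ≠ 0) :
    (u' a * (starRingEnd ℂ) (u a)).im ≠ 0 := by
  obtain ⟨hd1, hd2, hODE, hb1, hb2⟩ := hu
  -- bound on the potential
  obtain ⟨C, hC⟩ : ∃ C, ∀ t ∈ Icc a b, ‖V t - lam‖ ≤ C :=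
    isCompact_Icc.exists_bound_of_continuousOn (hVcont.sub continuousOn_const)
  -- clamped potential
  set W : ℝ → ℝ := fun t => V (min b (max a t)) - lam with hWdef
  have hWC : ∀ t, |W t| ≤ C := by
    intro t
    have hmem : min b (max a t) ∈ Icc a b :=
      ⟨le_min hab.le (le_max_left a t), min_le_left b _⟩
    simpa [hWdef, Real.norm_eq_abs] using hC _ hmem
  have hWeq : ∀ t ∈ Icc a b, W t = V t - lam := by
    intro t ht
    simp [hWdef, max_eq_right ht.1, min_eq_right ht.2]
  have hu2 : ∀ t ∈ Icc a b, u'' t = (W t : ℂ) • u t := by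
    intro t ht
    have h := hODE t ht
    rw [hWeq t ht, smul_eq_mul]
    push_cast
    linear_combination -h
  -- the system form of the equation
  set F : ℝ → ℂ × ℂ := fun t => (u t, u' t) with hFdef
  have hF : ∀ t ∈ Icc a b, HasDerivWithinAt F ((F t).2, (W t : ℂ) • (F t).1) (Icc a b) t := by
    intro t ht
    exact (hd1 t ht).prodMk (hu2 t ht ▸ hd2 t ht)
  have haI : a ∈ Icc a b := ⟨le_rfl, hab.le⟩
  have hbI : b ∈ Icc a b := ⟨hab.le, le_rfl⟩
  -- nondegeneracy of initial data
  have hz : u a ≠ 0 ∨ u' a ≠ 0 := by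
    by_contra hcon
    push_neg at hcon
    obtain ⟨h0, h0'⟩ := hcon
    have hzero : ∀ t ∈ Icc a b, HasDerivWithinAt (fun _ : ℝ => ((0 : ℂ), (0 : ℂ)))
        ((((0 : ℂ), (0 : ℂ)) : ℂ × ℂ).2, (W t : ℂ) • (((0 : ℂ), (0 : ℂ)) : ℂ × ℂ).1)
        (Icc a b) t := by
      intro t ht
      refine (hasDerivWithinAt_const t (Icc a b) (0 : ℂ)).prodMk ?_
      simpa using (hasDerivWithinAt_const t (Icc a b) (0 : ℂ))
    have := ode_unique_aux a b hab W C hWC F (fun _ => ((0 : ℂ), (0 : ℂ))) hF hzero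
      (by simp [hFdef, h0, h0', Prod.ext_iff])
    obtain ⟨x, hx, hxne⟩ := hne
    exact hxne (congrArg Prod.fst (this hx))
  intro h
  -- the Wronskian relation at `a`
  have hreal : (starRingEnd ℂ) (u' a) * u a = u' a * (starRingEnd ℂ) (u a) := by
    have := Complex.conj_eq_iff_im.mpr h
    rw [map_mul, Complex.conj_conj] at this
    exact this
  -- find the proportionality constant
  obtain ⟨c, hc0, hca, hca'⟩ : ∃ c : ℂ, c ≠ 0 ∧ (starRingEnd ℂ) (u a) = c * u a ∧
      (starRingEnd ℂ) (u' a) = c * u' a := by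
    rcases eq_or_ne (u a) 0 with h0 | h0
    · have h1 : u' a ≠ 0 := hz.resolve_left (by simp [h0])
      refine ⟨(starRingEnd ℂ) (u' a) / u' a, div_ne_zero (by simpa using h1) h1,
        by simp [h0], by field_simp⟩
    · refine ⟨(starRingEnd ℂ) (u a) / u a, div_ne_zero (by simpa using h0) h0,
        by field_simp, ?_⟩
      rw [div_mul_eq_mul_div, eq_div_iff h0]
      linear_combination hreal
  -- two solutions of the system agreeing at `a`
  set G : ℝ → ℂ × ℂ := fun t => ((starRingEnd ℂ) (u t), (starRingEnd ℂ) (u' t)) with hGdef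
  set H : ℝ → ℂ × ℂ := fun t => c • F t with hHdef
  have hG : ∀ t ∈ Icc a b, HasDerivWithinAt G ((G t).2, (W t : ℂ) • (G t).1) (Icc a b) t := by
    intro t ht
    have h1 : HasDerivWithinAt (fun s => (starRingEnd ℂ) (u s)) ((starRingEnd ℂ) (u' t))
        (Icc a b) t := by
      exact (hd1 t ht).star
    have h2 : HasDerivWithinAt (fun s => (starRingEnd ℂ) (u' s)) ((starRingEnd ℂ) (u'' t))
        (Icc a b) t := by
      exact (hd2 t ht).star
    have h3 : (starRingEnd ℂ) (u'' t) = (W t : ℂ) • (starRingEnd ℂ) (u t) := by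
      rw [hu2 t ht]
      simp [smul_eq_mul, map_mul, Complex.conj_ofReal]
    exact h1.prodMk (h3 ▸ h2)
  have hH : ∀ t ∈ Icc a b, HasDerivWithinAt H ((H t).2, (W t : ℂ) • (H t).1) (Icc a b) t := by
    intro t ht
    have h1 := (hF t ht).const_smul c
    have h2 : c • ((F t).2, (W t : ℂ) • (F t).1) = ((H t).2, (W t : ℂ) • (H t).1) := by
      simp only [hHdef, hFdef, Prod.smul_mk, smul_eq_mul, Prod.mk.injEq]
      exact ⟨trivial, mul_left_comm c _ _⟩
    exact h2 ▸ h1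
  have hinit : G a = H a := by
    simp [hGdef, hHdef, hFdef, Prod.ext_iff, hca, hca', smul_eq_mul]
  have heq := ode_unique_aux a b hab W C hWC G H hG hH hinit
  have hEb := heq hbI
  set E : ℂ := Complex.exp (θ * Complex.I) with hEdef
  have hE0 : E ≠ 0 := Complex.exp_ne_zero _
  have hEb1 : (starRingEnd ℂ) (u b) = c * u b := congrArg Prod.fst hEb
  have hEb2 : (starRingEnd ℂ) (u' b) = c * u' b := congrArg Prod.snd hEb
  rw [hb1, map_mul, hca] at hEb1
  rw [hb2, map_mul, hca'] at hEb2
  -- conclude `conj E = E` from nondegeneracy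
  have hEE : (starRingEnd ℂ) E = E := by
    rcases hz with h0 | h0
    · have : ((starRingEnd ℂ) E - E) * (c * u a) = 0 := by ring_nf; linear_combination hEb1
      rcases mul_eq_zero.mp this with h' | h'
      · exact sub_eq_zero.mp h'
      · exact absurd h' (mul_ne_zero hc0 h0)
    · have : ((starRingEnd ℂ) E - E) * (c * u' a) = 0 := by ring_nf; linear_combination hEb2
      rcases mul_eq_zero.mp this with h' | h'
      · exact sub_eq_zero.mp h'
      · exact absurd h' (mul_ne_zero hc0 h0)
  -- but `Im E = sin θ ≠ 0`
  have hsin : Real.sin θ ≠ 0 := by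
    rcases hθ with hθ | hθ
    · exact ne_of_gt (Real.sin_pos_of_pos_of_lt_pi hθ.1 hθ.2)
    · have h1 : Real.sin (θ - Real.pi) > 0 :=
        Real.sin_pos_of_pos_of_lt_pi (by linarith [hθ.1]) (by linarith [hθ.2])
      rw [Real.sin_sub_pi] at h1
      linarith
  have hEim : E.im = Real.sin θ := by
    rw [hEdef, Complex.exp_ofReal_mul_I_im]
  have : E.im = 0 := by
    have := congrArg Complex.im hEE
    simp [Complex.conj_im] at this
    linarith
  rw [hEim] at this
  exact hsin this
end
end
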